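/- arXiv:1806.10406 — 5 statements merged into one kernel-verified Lean document; each statement's English description precedes it below -/
import Mathlib

section
/- Let k ≥ 1 be an integer and β(1),…,β(k) real numbers. For s ∈ {0,1,…,k} set f(s) = −s + Σ_{i=s+1}^k β(i), let B = max_{s∈{0,…,k}} f(s), and let r be the number of maximizers of f. Then there exist constants 0 < C₁ ≤ C₂ < ∞ and t₀ ≥ 2 such that for all real t ≥ t₀: C₁ · t^{k+B} (log t)^{r−1} ≤ Σ_{1 ≤ i₁ < i₂ < ⋯ < i_k ≤ t, i_q ∈ ℕ} ∏_{q=1}^k i_q^{β(q)} ≤ C₂ · t^{k+B} (log t)^{r−1}. -/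
open Finset Real

/-- `f k β s = -s + ∑_{i=s+1}^k β i`. -/
noncomputable def maxF (k : ℕ) (β : ℕ → ℝ) (s : ℕ) : ℝ :=
  -(s : ℝ) + ∑ i ∈ Finset.Icc (s + 1) k, β i

/-- `B = max_{s ∈ {0,…,k}} f s`. -/
noncomputable def maxB (k : ℕ) (β : ℕ → ℝ) : ℝ :=
  (Finset.range (k + 1)).sup' (by simp) (maxF k β)

/-- `r` = number of maximizers of `f` on `{0,…,k}`. -/
noncomputable def numMax (k : ℕ) (β : ℕ → ℝ) : ℕ :=
  ((Finset.range (k + 1)).filter fun s => maxF k β s = maxB k β).card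


lemma maxF_self (k : ℕ) (β : ℕ → ℝ) : maxF k β k = -(k : ℝ) := by
  simp [maxF]

lemma le_maxB (k : ℕ) (β : ℕ → ℝ) {s : ℕ} (hs : s ≤ k) : maxF k β s ≤ maxB k β :=
  Finset.le_sup' _ (Finset.mem_range.2 (Nat.lt_succ_of_le hs))

lemma k_add_maxB_nonneg (k : ℕ) (β : ℕ → ℝ) : 0 ≤ (k : ℝ) + maxB k β := by
  have := le_maxB k β (le_refl k)
  rw [maxF_self] at this; linarith

lemma exists_maxB (k : ℕ) (β : ℕ → ℝ) : ∃ s ≤ k, maxF k β s = maxB k β := by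
  obtain ⟨i, hi, h⟩ := Finset.exists_mem_eq_sup' (by simp : (Finset.range (k+1)).Nonempty) (maxF k β)
  exact ⟨i, Nat.lt_succ_iff.1 (Finset.mem_range.1 hi), h.symm⟩

lemma numMax_pos (k : ℕ) (β : ℕ → ℝ) : 0 < numMax k β := by
  obtain ⟨s, hs, h⟩ := exists_maxB k β
  rw [numMax, Finset.card_pos]
  exact ⟨s, Finset.mem_filter.2 ⟨Finset.mem_range.2 (Nat.lt_succ_of_le hs), h⟩⟩

lemma maxB_zero (β : ℕ → ℝ) : maxB 0 β = 0 := by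
  simp [maxB, maxF]

lemma numMax_zero (β : ℕ → ℝ) : numMax 0 β = 1 := by
  rw [numMax]
  rw [Finset.range_one, Finset.filter_singleton, if_pos (by simp [maxB, Finset.range_one])]
  simp

lemma maxF_succ (k : ℕ) (β : ℕ → ℝ) {s : ℕ} (hs : s ≤ k) :
    maxF (k + 1) β s = maxF k β s + β (k + 1) := by
  unfold maxF
  rw [Finset.sum_Icc_succ_top (by omega : s + 1 ≤ k + 1)]
  ring

lemma maxF_succ_self (k : ℕ) (β : ℕ → ℝ) : maxF (k + 1) β (k + 1) = -((k : ℝ) + 1) := by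
  rw [maxF, Finset.Icc_eq_empty (by omega)]
  push_cast; simp

lemma maxB_succ (k : ℕ) (β : ℕ → ℝ) :
    maxB (k + 1) β = max (maxB k β + β (k + 1)) (-((k : ℝ) + 1)) := by
  apply le_antisymm
  · apply Finset.sup'_le
    intro s hs
    rcases Nat.lt_succ_iff_lt_or_eq.1 (Finset.mem_range.1 hs) with h | h
    · rw [maxF_succ k β (Nat.lt_succ_iff.1 h)]
      exact le_max_of_le_left (by have := le_maxB k β (Nat.lt_succ_iff.1 h); linarith)
    · rw [h, maxF_succ_self]
      exact le_max_right _ _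
  · apply max_le
    · obtain ⟨s, hs, h⟩ := exists_maxB k β
      rw [← h, ← maxF_succ k β hs]
      exact le_maxB (k+1) β (by omega)
    · rw [← maxF_succ_self k β]
      exact le_maxB (k+1) β (le_refl _)

lemma range_succ_filter (k : ℕ) (β : ℕ → ℝ) :
    ((Finset.range (k + 2)).filter fun s => maxF (k+1) β s = maxB (k+1) β).card
    = ((Finset.range (k + 1)).filter fun s => maxF (k+1) β s = maxB (k+1) β).card
      + (if maxF (k+1) β (k+1) = maxB (k+1) β then 1 else 0) := by
  classical
  rw [Finset.range_add_one, Finset.filter_insert]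
  split_ifs with h
  · rw [Finset.card_insert_of_notMem (by simp)]
  · rfl

lemma numMax_succ_gt (k : ℕ) (β : ℕ → ℝ) (h : -((k : ℝ) + 1) < maxB k β + β (k + 1)) :
    numMax (k + 1) β = numMax k β := by
  classical
  have hB : maxB (k+1) β = maxB k β + β (k+1) := by
    rw [maxB_succ]; exact max_eq_left h.le
  rw [numMax, range_succ_filter]
  rw [if_neg (by rw [maxF_succ_self, hB]; exact ne_of_lt h), add_zero]
  rw [numMax]
  congr 1
  apply Finset.filter_congr
  intro s hs
  have hs' : s ≤ k := Nat.lt_succ_iff.1 (Finset.mem_range.1 hs)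
  rw [maxF_succ k β hs', hB]
  simp

lemma numMax_succ_eq (k : ℕ) (β : ℕ → ℝ) (h : maxB k β + β (k + 1) = -((k : ℝ) + 1)) :
    numMax (k + 1) β = numMax k β + 1 := by
  classical
  have hB : maxB (k+1) β = maxB k β + β (k+1) := by
    rw [maxB_succ, h]; exact max_self _
  rw [numMax, range_succ_filter]
  rw [if_pos (by rw [maxF_succ_self, hB, h])]
  congr 1
  rw [numMax]
  congr 1
  apply Finset.filter_congr
  intro s hs
  have hs' : s ≤ k := Nat.lt_succ_iff.1 (Finset.mem_range.1 hs)
  rw [maxF_succ k β hs', hB]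
  simp

lemma numMax_succ_lt (k : ℕ) (β : ℕ → ℝ) (h : maxB k β + β (k + 1) < -((k : ℝ) + 1)) :
    numMax (k + 1) β = 1 := by
  classical
  have hB : maxB (k+1) β = -((k:ℝ)+1) := by
    rw [maxB_succ]; exact max_eq_right h.le
  rw [numMax, range_succ_filter]
  rw [if_pos (by rw [maxF_succ_self, hB])]
  have : ((Finset.range (k + 1)).filter fun s => maxF (k+1) β s = maxB (k+1) β) = ∅ := by
    apply Finset.filter_false_of_mem
    intro s hs
    have hs' : s ≤ k := Nat.lt_succ_iff.1 (Finset.mem_range.1 hs)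
    rw [maxF_succ k β hs', hB]
    have := le_maxB k β hs'
    intro hc; linarith
  rw [this]
  simp


noncomputable def Tsum (k n : ℕ) (β : ℕ → ℝ) : ℝ :=
  ∑ i ∈ (Fintype.piFinset fun _ : Fin k => Finset.Icc 1 n).filter (fun i => StrictMono i),
    ∏ q : Fin k, (i q : ℝ) ^ β ((q : ℕ) + 1)

lemma Tsum_zero (n : ℕ) (β : ℕ → ℝ) : Tsum 0 n β = 1 := by
  rw [Tsum]
  have h : ∀ i ∈ (Fintype.piFinset fun _ : Fin 0 => Finset.Icc 1 n), StrictMono i :=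
    fun i _ a b _ => a.elim0
  rw [Finset.filter_true_of_mem h]
  simp

lemma Tsum_nonneg (k n : ℕ) (β : ℕ → ℝ) : 0 ≤ Tsum k n β := by
  apply Finset.sum_nonneg
  intro i _
  exact Finset.prod_nonneg fun q _ => Real.rpow_nonneg (Nat.cast_nonneg _) _

lemma Tsum_mono (k : ℕ) (β : ℕ → ℝ) {n n' : ℕ} (h : n ≤ n') : Tsum k n β ≤ Tsum k n' β := by
  apply Finset.sum_le_sum_of_subset_of_nonneg
  · exact Finset.filter_subset_filter _
      (Fintype.piFinset_subset _ _ fun _ => Finset.Icc_subset_Icc_right h)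
  · intro i _ _
    exact Finset.prod_nonneg fun q _ => Real.rpow_nonneg (Nat.cast_nonneg _) _

lemma Tsum_zero_right {k : ℕ} (hk : 1 ≤ k) (β : ℕ → ℝ) : Tsum k 0 β = 0 := by
  rw [Tsum]
  apply Finset.sum_eq_zero
  intro i hi
  exfalso
  rw [Finset.mem_filter, Fintype.mem_piFinset] at hi
  have := hi.1 ⟨0, hk⟩
  rw [Finset.mem_Icc] at this
  omega

lemma Tsum_succ (k n : ℕ) (β : ℕ → ℝ) :
    Tsum (k + 1) n β = ∑ m ∈ Finset.Icc 1 n, (m : ℝ) ^ (β (k + 1)) * Tsum k (m - 1) β := by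
  classical
  rw [Tsum]
  simp_rw [Tsum, Finset.mul_sum]
  rw [Finset.sum_sigma']
  apply Finset.sum_nbij' (i := fun i => (⟨i (Fin.last k), Fin.init i⟩ :
      Σ _m : ℕ, (Fin k → ℕ))) (j := fun p => Fin.snoc p.2 p.1)
  · intro i hi
    rw [Finset.mem_filter, Fintype.mem_piFinset] at hi
    obtain ⟨hmem, hmono⟩ := hi
    rw [Finset.mem_sigma]
    refine ⟨hmem _, ?_⟩
    rw [Finset.mem_filter, Fintype.mem_piFinset]
    constructor
    · intro q
      dsimp only [Fin.init]
      have h1 := Finset.mem_Icc.1 (hmem (Fin.castSucc q))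
      have h2 : i (Fin.castSucc q) < i (Fin.last k) := hmono (Fin.castSucc_lt_last q)
      exact Finset.mem_Icc.2 ⟨h1.1, by omega⟩
    · intro a b hab
      dsimp only [Fin.init]
      exact hmono (Fin.castSucc_lt_castSucc_iff.2 hab)
  · intro p hp
    rw [Finset.mem_sigma, Finset.mem_filter, Fintype.mem_piFinset] at hp
    obtain ⟨hm, hmem, hmono⟩ := hp
    rw [Finset.mem_Icc] at hm
    have hlt : ∀ q : Fin k, p.2 q < p.1 := by
      intro q
      have := (Finset.mem_Icc.1 (hmem q)).2
      omega
    rw [Finset.mem_filter, Fintype.mem_piFinset]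
    constructor
    · intro q
      rcases Fin.eq_castSucc_or_eq_last q with ⟨q', rfl⟩ | rfl
      · rw [Fin.snoc_castSucc]
        have := Finset.mem_Icc.1 (hmem q')
        exact Finset.mem_Icc.2 ⟨this.1, by omega⟩
      · rw [Fin.snoc_last]; exact Finset.mem_Icc.2 hm
    · intro a b hab
      rcases Fin.eq_castSucc_or_eq_last b with ⟨b', rfl⟩ | rfl
      · rcases Fin.eq_castSucc_or_eq_last a with ⟨a', rfl⟩ | rfl
        · rw [Fin.snoc_castSucc, Fin.snoc_castSucc]
          exact hmono (Fin.castSucc_lt_castSucc_iff.1 hab)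
        · exact absurd (hab.trans (Fin.castSucc_lt_last b')) (lt_irrefl _)
      · rcases Fin.eq_castSucc_or_eq_last a with ⟨a', rfl⟩ | rfl
        · rw [Fin.snoc_castSucc, Fin.snoc_last]
          exact hlt a'
        · exact absurd hab (lt_irrefl _)
  · intro i _
    exact Fin.snoc_init_self i
  · intro p _
    simp
  · intro i _
    rw [Fin.prod_univ_castSucc, mul_comm]
    simp [Fin.init]


lemma pow_sub_pow_bounds {u v : ℝ} (hu : 0 ≤ u) (huv : u ≤ v) (p : ℕ) :
    (p + 1 : ℝ) * u ^ p * (v - u) ≤ v ^ (p + 1) - u ^ (p + 1) ∧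
      v ^ (p + 1) - u ^ (p + 1) ≤ (p + 1 : ℝ) * v ^ p * (v - u) := by
  induction p with
  | zero => norm_num
  | succ p ih =>
    obtain ⟨ih1, ih2⟩ := ih
    have hv : 0 ≤ v := hu.trans huv
    have hup : 0 ≤ u ^ p := pow_nonneg hu p
    have hvp : 0 ≤ v ^ p := pow_nonneg hv p
    have hupp : u ^ p * u ≤ v ^ p * v :=
      mul_le_mul (pow_le_pow_left₀ hu huv p) huv hu hvp
    simp only [pow_succ] at ih1 ih2
    have h1 := mul_le_mul_of_nonneg_right ih1 hv
    have h2 := mul_le_mul_of_nonneg_right ih2 hv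
    have h3 : 0 ≤ ((p:ℝ) + 1) * u ^ p * (v - u) * (v - u) := by
      apply mul_nonneg
      apply mul_nonneg (mul_nonneg (by positivity) hup) (by linarith)
      linarith
    have hE : 0 ≤ (v ^ p * v - u ^ p * u) * (v - u) :=
      mul_nonneg (sub_nonneg.2 hupp) (sub_nonneg.2 huv)
    constructor
    · simp only [pow_succ]
      push_cast
      nlinarith [h1, h3, mul_nonneg (mul_nonneg hup hu) (sub_nonneg.2 huv)]
    · simp only [pow_succ]
      push_cast
      nlinarith [h2, hE]

lemma bern_pos {x c : ℝ} (hx : 0 ≤ x) (hx1 : x ≤ 1) (hc0 : 0 ≤ c) (hc1 : c ≤ 1) :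
    (1 - x) ^ c ≤ 1 - c * x := by
  have h := rpow_one_add_le_one_add_mul_self (s := -x) (by linarith) hc0 hc1
  rw [← sub_eq_add_neg] at h
  calc (1 - x) ^ c ≤ 1 + c * (-x) := h
    _ = 1 - c * x := by ring

lemma bern_neg {x d : ℝ} (hx : 0 ≤ x) (hx1 : x < 1) (hd : 0 ≤ d) :
    1 + d * x ≤ (1 - x) ^ (-d) := by
  have h1x : 0 < 1 - x := by linarith
  rw [Real.rpow_neg h1x.le]
  rcases le_or_gt 1 d with h1 | h1
  · have hs : (0:ℝ) ≤ x / (1 - x) := div_nonneg hx h1x.le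
    have h := one_add_mul_self_le_rpow_one_add (s := x / (1 - x)) (by linarith) h1
    have he : 1 + x / (1 - x) = (1 - x)⁻¹ := by field_simp; ring
    rw [he, Real.inv_rpow h1x.le] at h
    have hxx : x ≤ x / (1 - x) := by
      rw [le_div_iff₀ h1x]
      nlinarith
    calc 1 + d * x ≤ 1 + d * (x / (1 - x)) := by
          have := mul_le_mul_of_nonneg_left hxx hd
          linarith
      _ ≤ ((1 - x) ^ d)⁻¹ := h
  · have hb := bern_pos hx hx1.le hd h1.le
    have hdx : d * x < 1 := by nlinarith
    have hpos : 0 < 1 - d * x := by linarith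
    have hpow : (0:ℝ) < (1 - x) ^ d := Real.rpow_pos_of_pos h1x _
    have step1 : 1 + d * x ≤ (1 - d * x)⁻¹ := by
      rw [inv_eq_one_div, le_div_iff₀ hpos]
      nlinarith [sq_nonneg (d * x)]
    have step2 : (1 - d * x)⁻¹ ≤ ((1 - x) ^ d)⁻¹ := by
      apply one_div_le_one_div_of_le hpow hb |>.trans_eq (by rw [one_div]) |>.trans_eq' (by rw [one_div])
    exact step1.trans step2

lemma log_le_rpow_div {δ : ℝ} (hδ : 0 < δ) {x : ℝ} (hx : 1 ≤ x) :
    Real.log x ≤ x ^ δ / δ := by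
  have hx0 : 0 < x := lt_of_lt_of_le zero_lt_one hx
  have h1 : Real.log (x ^ δ) = δ * Real.log x := Real.log_rpow hx0 δ
  have h2 : Real.log (x ^ δ) ≤ x ^ δ - 1 :=
    Real.log_le_sub_one_of_pos (Real.rpow_pos_of_pos hx0 δ)
  rw [h1] at h2
  rw [le_div_iff₀ hδ]
  have := Real.rpow_pos_of_pos hx0 δ
  linarith

lemma sum_Icc_telescope (F : ℕ → ℝ) {K n : ℕ} (h : K ≤ n + 1) :
    ∑ m ∈ Finset.Icc K n, (F (m + 1) - F m) = F (n + 1) - F K := by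
  induction n with
  | zero =>
    interval_cases K
    · simp
    · simp
  | succ n ih =>
    rcases Nat.lt_or_ge K (n + 2) with h' | h'
    · rw [Finset.sum_Icc_succ_top (by omega : K ≤ n + 1), ih (by omega)]
      ring
    · have hK : K = n + 2 := by omega
      subst hK
      rw [Finset.Icc_eq_empty (by omega)]
      simp

lemma sum_Icc_telescope' (F : ℕ → ℝ) {K n : ℕ} (hK : 1 ≤ K) (h : K ≤ n + 1) :
    ∑ m ∈ Finset.Icc K n, (F m - F (m - 1)) = F n - F (K - 1) := by
  induction n with
  | zero =>
    interval_cases K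
    · simp
  | succ n ih =>
    rcases Nat.lt_or_ge K (n + 2) with h' | h'
    · rw [Finset.sum_Icc_succ_top (by omega : K ≤ n + 1), ih (by omega)]
      simp only [Nat.add_sub_cancel]
      ring
    · have hK : K = n + 2 := by omega
      subst hK
      rw [Finset.Icc_eq_empty (by omega)]
      simp

/-- for `-1 < a < 0`: `(a+1) m^a ≤ m^(a+1) - (m-1)^(a+1)`. -/
lemma rpow_telescope_pos {a : ℝ} (ha : -1 < a) (ha0 : a < 0) {m : ℕ} (hm : 2 ≤ m) :
    (a + 1) * (m : ℝ) ^ a ≤ (m : ℝ) ^ (a + 1) - (((m - 1 : ℕ) : ℝ)) ^ (a + 1) := by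
  have hm0 : (0:ℝ) < m := by positivity
  have hmr : ((m - 1 : ℕ) : ℝ) = (m : ℝ) - 1 := by
    have : (1:ℕ) ≤ m := by omega
    push_cast [this]; ring
  have hx : (0:ℝ) ≤ 1 / m := by positivity
  have hx1 : (1:ℝ) / m ≤ 1 := by
    rw [div_le_one hm0]; exact_mod_cast Nat.one_le_iff_ne_zero.2 (by omega)
  have hb := bern_pos hx hx1 (by linarith : (0:ℝ) ≤ a + 1) (by linarith : a + 1 ≤ 1)
  have hfac : (m:ℝ) - 1 = (m:ℝ) * (1 - 1/m) := by field_simp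
  have hmul : ((m:ℝ) - 1) ^ (a+1) = (m:ℝ) ^ (a+1) * (1 - 1/m) ^ (a+1) := by
    rw [hfac, Real.mul_rpow hm0.le (by linarith [hx1] : (0:ℝ) ≤ 1 - 1/m)]
  have hpow : (0:ℝ) < (m:ℝ) ^ (a+1) := Real.rpow_pos_of_pos hm0 _
  have h2 : ((m:ℝ) - 1) ^ (a+1) ≤ (m:ℝ) ^ (a+1) * (1 - (a+1) * (1/m)) := by
    rw [hmul]
    exact mul_le_mul_of_nonneg_left hb hpow.le
  have h3 : (m:ℝ) ^ (a+1) * ((a+1) * (1/m)) = (a+1) * (m:ℝ) ^ a := by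
    rw [Real.rpow_add_one (ne_of_gt hm0)]
    field_simp
  rw [hmr]
  nlinarith [h2, h3]

/-- for `a < -1`: `-(a+1) m^a ≤ (m-1)^(a+1) - m^(a+1)`. -/
lemma rpow_telescope_neg {a : ℝ} (ha : a < -1) {m : ℕ} (hm : 2 ≤ m) :
    (-(a + 1)) * (m : ℝ) ^ a ≤ (((m - 1 : ℕ) : ℝ)) ^ (a + 1) - (m : ℝ) ^ (a + 1) := by
  have hm0 : (0:ℝ) < m := by positivity
  have hmr : ((m - 1 : ℕ) : ℝ) = (m : ℝ) - 1 := by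
    have : (1:ℕ) ≤ m := by omega
    push_cast [this]; ring
  have hx : (0:ℝ) ≤ 1 / m := by positivity
  have hx1 : (1:ℝ) / m < 1 := by
    rw [div_lt_one hm0]; exact_mod_cast by omega
  have hb := bern_neg hx hx1 (by linarith : (0:ℝ) ≤ -(a + 1))
  rw [neg_neg] at hb
  have hfac : (m:ℝ) - 1 = (m:ℝ) * (1 - 1/m) := by field_simp
  have hmul : ((m:ℝ) - 1) ^ (a+1) = (m:ℝ) ^ (a+1) * (1 - 1/m) ^ (a+1) := by
    rw [hfac, Real.mul_rpow hm0.le (by linarith [hx1] : (0:ℝ) ≤ 1 - 1/m)]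
  have hpow : (0:ℝ) < (m:ℝ) ^ (a+1) := Real.rpow_pos_of_pos hm0 _
  have h2 : (m:ℝ) ^ (a+1) * (1 + (-(a+1)) * (1/m)) ≤ ((m:ℝ) - 1) ^ (a+1) := by
    rw [hmul]
    exact mul_le_mul_of_nonneg_left hb hpow.le
  have h3 : (m:ℝ) ^ (a+1) * ((-(a+1)) * (1/m)) = (-(a+1)) * (m:ℝ) ^ a := by
    rw [Real.rpow_add_one (ne_of_gt hm0)]
    field_simp
  rw [hmr]
  nlinarith [h2, h3]

lemma upper_sum_rpow {a : ℝ} (ha : -1 < a) {n : ℕ} (hn : 1 ≤ n) :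
    ∑ m ∈ Finset.Icc 1 n, (m : ℝ) ^ a ≤ (1 + 1 / (a + 1)) * (n : ℝ) ^ (a + 1) := by
  have hc : 0 < a + 1 := by linarith
  have hn0 : (0:ℝ) < n := by exact_mod_cast Nat.pos_of_ne_zero (by omega)
  have h1n : (1:ℝ) ≤ (n:ℝ) ^ (a + 1) := by
    calc (1:ℝ) = (1:ℝ) ^ (a+1) := (Real.one_rpow _).symm
    _ ≤ (n:ℝ) ^ (a+1) := Real.rpow_le_rpow zero_le_one (by exact_mod_cast hn) hc.le
  rcases le_or_gt 0 a with ha0 | ha0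
  · have hb : ∀ m ∈ Finset.Icc 1 n, (m:ℝ) ^ a ≤ (n:ℝ) ^ a := by
      intro m hm
      rw [Finset.mem_Icc] at hm
      exact Real.rpow_le_rpow (by positivity) (by exact_mod_cast hm.2) ha0
    calc ∑ m ∈ Finset.Icc 1 n, (m : ℝ) ^ a ≤ (Finset.Icc 1 n).card • (n:ℝ) ^ a :=
          Finset.sum_le_card_nsmul _ _ _ hb
      _ = (n : ℝ) * (n:ℝ) ^ a := by
          rw [Nat.card_Icc, nsmul_eq_mul]
          norm_num
      _ = (n : ℝ) ^ (a + 1) := by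
          rw [Real.rpow_add_one (ne_of_gt hn0)]; ring
      _ ≤ (1 + 1 / (a + 1)) * (n : ℝ) ^ (a + 1) := by
          apply le_mul_of_one_le_left (by positivity)
          have : 0 < 1 / (a+1) := by positivity
          linarith
  · rw [← Finset.Ico_add_one_right_eq_Icc, Finset.sum_eq_sum_Ico_succ_bot (by omega : 1 < n + 1),
      Finset.Ico_add_one_right_eq_Icc]
    have htel : ∑ m ∈ Finset.Icc 2 n,
        ((fun j => ((j:ℕ):ℝ) ^ (a+1)) m - (fun j => ((j:ℕ):ℝ) ^ (a+1)) (m-1))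
        = (n:ℝ) ^ (a+1) - 1 := by
      rw [sum_Icc_telescope' (fun j => ((j:ℕ):ℝ) ^ (a+1)) (by omega) (by omega)]
      norm_num
    have hterm : ∀ m ∈ Finset.Icc 2 n, (m:ℝ) ^ a
        ≤ (1/(a+1)) * (((m:ℕ):ℝ) ^ (a+1) - ((m-1:ℕ):ℝ) ^ (a+1)) := by
      intro m hm
      rw [Finset.mem_Icc] at hm
      have h := rpow_telescope_pos ha ha0 hm.1
      calc (m:ℝ) ^ a = (1/(a+1)) * ((a+1) * (m:ℝ) ^ a) := by field_simp
        _ ≤ (1/(a+1)) * (((m:ℕ):ℝ) ^ (a+1) - ((m-1:ℕ):ℝ) ^ (a+1)) :=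
            mul_le_mul_of_nonneg_left h (by positivity)
    have hsum : ∑ m ∈ Finset.Icc 2 n, (m:ℝ) ^ a ≤ (1/(a+1)) * ((n:ℝ) ^ (a+1) - 1) := by
      calc ∑ m ∈ Finset.Icc 2 n, (m:ℝ) ^ a
          ≤ ∑ m ∈ Finset.Icc 2 n, (1/(a+1)) * (((m:ℕ):ℝ) ^ (a+1) - ((m-1:ℕ):ℝ) ^ (a+1)) :=
            Finset.sum_le_sum hterm
        _ = (1/(a+1)) * ((n:ℝ) ^ (a+1) - 1) := by
            rw [← Finset.mul_sum, htel]
    have h1 : ((1:ℕ):ℝ) ^ a = 1 := by norm_num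
    rw [h1]
    have hfin : 0 < 1/(a+1) := by positivity
    nlinarith [hsum, h1n]

lemma upper_A {a : ℝ} (ha : -1 < a) (p : ℕ) {n : ℕ} (hn : 1 ≤ n) :
    ∑ m ∈ Finset.Icc 1 n, (m : ℝ) ^ a * Real.log m ^ p
      ≤ (1 + 1 / (a + 1)) * ((n : ℝ) ^ (a + 1) * Real.log n ^ p) := by
  have hlogn : 0 ≤ Real.log n := Real.log_nonneg (by exact_mod_cast hn)
  have h1 : ∀ m ∈ Finset.Icc 1 n, (m:ℝ) ^ a * Real.log m ^ p ≤ (m:ℝ) ^ a * Real.log n ^ p := by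
    intro m hm
    rw [Finset.mem_Icc] at hm
    apply mul_le_mul_of_nonneg_left _ (Real.rpow_nonneg (by positivity) _)
    apply pow_le_pow_left₀ (Real.log_nonneg (by exact_mod_cast hm.1))
    exact Real.log_le_log (by exact_mod_cast hm.1) (by exact_mod_cast hm.2)
  calc ∑ m ∈ Finset.Icc 1 n, (m:ℝ) ^ a * Real.log m ^ p
      ≤ ∑ m ∈ Finset.Icc 1 n, (m:ℝ) ^ a * Real.log n ^ p := Finset.sum_le_sum h1
    _ = (∑ m ∈ Finset.Icc 1 n, (m:ℝ) ^ a) * Real.log n ^ p := by rw [Finset.sum_mul]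
    _ ≤ ((1 + 1/(a+1)) * (n:ℝ) ^ (a+1)) * Real.log n ^ p := by
        apply mul_le_mul_of_nonneg_right (upper_sum_rpow ha hn) (pow_nonneg hlogn p)
    _ = (1 + 1/(a+1)) * ((n:ℝ) ^ (a+1) * Real.log n ^ p) := by ring

lemma log_succ_sub_ge {m : ℕ} (hm : 1 ≤ m) :
    1 / (2 * (m:ℝ)) ≤ Real.log (m + 1) - Real.log m := by
  have hm0 : (0:ℝ) < m := by exact_mod_cast hm
  have h1 : Real.log ((m:ℝ) / (m + 1)) ≤ (m:ℝ)/(m+1) - 1 :=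
    Real.log_le_sub_one_of_pos (by positivity)
  have h2 : Real.log ((m:ℝ) / (m+1)) = Real.log m - Real.log (m+1) :=
    Real.log_div (by positivity) (by positivity)
  have h3 : (m:ℝ)/(m+1) - 1 = -(1/((m:ℝ)+1)) := by field_simp; ring
  have h4 : 1/((m:ℝ)+1) ≤ Real.log (m+1) - Real.log m := by
    rw [h2, h3] at h1; linarith
  have h5 : 1/(2*(m:ℝ)) ≤ 1/((m:ℝ)+1) := by
    apply one_div_le_one_div_of_le (by positivity)
    have : (1:ℝ) ≤ m := by exact_mod_cast hm
    linarith
  linarith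

lemma log_succ_sub_le {m : ℕ} (hm : 1 ≤ m) :
    Real.log (m + 1) - Real.log m ≤ 1 / (m:ℝ) := by
  have hm0 : (0:ℝ) < m := by exact_mod_cast hm
  have h1 : Real.log (((m:ℝ)+1) / m) ≤ ((m:ℝ)+1)/m - 1 :=
    Real.log_le_sub_one_of_pos (by positivity)
  have h2 : Real.log (((m:ℝ)+1) / m) = Real.log (m+1) - Real.log m :=
    Real.log_div (by positivity) (by positivity)
  have h3 : ((m:ℝ)+1)/m - 1 = 1/(m:ℝ) := by field_simp; ring
  rw [h2, h3] at h1
  exact h1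

lemma upper_B (p : ℕ) {n : ℕ} (hn : 2 ≤ n) :
    ∑ m ∈ Finset.Icc 1 n, (m : ℝ) ^ (-1 : ℝ) * Real.log m ^ p
      ≤ 2 ^ (p + 2) / (p + 1) * Real.log n ^ (p + 1) := by
  set F : ℕ → ℝ := fun j => Real.log j ^ (p + 1) with hF
  have hterm : ∀ m ∈ Finset.Icc 1 n, (m:ℝ) ^ (-1:ℝ) * Real.log m ^ p
      ≤ 2/((p:ℝ)+1) * (F (m+1) - F m) := by
    intro m hm
    rw [Finset.mem_Icc] at hm
    have hm1 : (1:ℝ) ≤ m := by exact_mod_cast hm.1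
    have hm0 : (0:ℝ) < m := by linarith
    have hu : 0 ≤ Real.log m := Real.log_nonneg hm1
    have huv : Real.log m ≤ Real.log (m+1) := Real.log_le_log hm0 (by linarith)
    have hP := (pow_sub_pow_bounds hu huv p).1
    have hgap := log_succ_sub_ge hm.1
    have hcast : Real.log ((m:ℕ):ℝ) = Real.log (m:ℝ) := rfl
    have hFm : F (m+1) - F m = Real.log ((m:ℝ)+1) ^ (p+1) - Real.log (m:ℝ) ^ (p+1) := by
      simp only [hF]
      push_cast
      ring_nf
    have hchain : ((p:ℝ)+1) * Real.log m ^ p * (1/(2*(m:ℝ)))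
        ≤ F (m+1) - F m := by
      rw [hFm]
      calc ((p:ℝ)+1) * Real.log m ^ p * (1/(2*(m:ℝ)))
          ≤ ((p:ℝ)+1) * Real.log m ^ p * (Real.log (m+1) - Real.log m) := by
            apply mul_le_mul_of_nonneg_left hgap (by positivity)
        _ ≤ Real.log ((m:ℝ)+1) ^ (p+1) - Real.log (m:ℝ) ^ (p+1) := by
            exact_mod_cast hP
    have hrw : (m:ℝ) ^ (-1:ℝ) = 1/(m:ℝ) := by
      rw [Real.rpow_neg_one]; exact inv_eq_one_div _
    rw [hrw]
    calc 1/(m:ℝ) * Real.log m ^ p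
          = (2/((p:ℝ)+1)) * (((p:ℝ)+1) * Real.log m ^ p * (1/(2*(m:ℝ)))) := by
            field_simp
      _ ≤ (2/((p:ℝ)+1)) * (F (m+1) - F m) := by
          apply mul_le_mul_of_nonneg_left hchain (by positivity)
  calc ∑ m ∈ Finset.Icc 1 n, (m:ℝ) ^ (-1:ℝ) * Real.log m ^ p
      ≤ ∑ m ∈ Finset.Icc 1 n, 2/((p:ℝ)+1) * (F (m+1) - F m) := Finset.sum_le_sum hterm
    _ = 2/((p:ℝ)+1) * (F (n+1) - F 1) := by
        rw [← Finset.mul_sum, sum_Icc_telescope F (by omega)]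
    _ ≤ 2/((p:ℝ)+1) * (2 ^ (p+1) * Real.log n ^ (p+1)) := by
        apply mul_le_mul_of_nonneg_left _ (by positivity)
        have hF1 : F 1 = 0 := by simp [hF]
        have hFn : F (n+1) ≤ 2 ^ (p+1) * Real.log n ^ (p+1) := by
          have h1 : Real.log ((n:ℕ)+1 : ℕ) ≤ 2 * Real.log n := by
            have hle : ((n:ℕ)+1 : ℕ) ≤ (n:ℕ)*(n:ℕ) := by nlinarith
            calc Real.log ((n:ℕ)+1 : ℕ) ≤ Real.log ((n:ℕ)*(n:ℕ) : ℕ) := by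
                  apply Real.log_le_log (by positivity) (by exact_mod_cast hle)
              _ = 2 * Real.log n := by
                  push_cast
                  rw [Real.log_mul (by positivity) (by positivity)]; ring
          have h2 : 0 ≤ Real.log ((n:ℕ)+1 : ℕ) := Real.log_nonneg (by push_cast; linarith)
          calc F (n+1) = Real.log ((n:ℕ)+1 : ℕ) ^ (p+1) := rfl
            _ ≤ (2 * Real.log n) ^ (p+1) := pow_le_pow_left₀ h2 h1 _
            _ = 2 ^ (p+1) * Real.log n ^ (p+1) := by rw [mul_pow]
        linarith
    _ = 2 ^ (p+2) / ((p:ℝ)+1) * Real.log n ^ (p+1) := by ring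

lemma upper_sum_rpow_neg {a : ℝ} (ha : a < -1) (n : ℕ) :
    ∑ m ∈ Finset.Icc 1 n, (m : ℝ) ^ a ≤ 1 + 1 / (-(a + 1)) := by
  have hc : 0 < -(a+1) := by linarith
  rcases Nat.lt_or_ge n 1 with hn | hn
  · interval_cases n
    simp
    have h0 : (0:ℝ) < (-1 + -a)⁻¹ := by rw [inv_pos]; linarith
    linarith
  · rw [← Finset.Ico_add_one_right_eq_Icc, Finset.sum_eq_sum_Ico_succ_bot (by omega : 1 < n + 1),
      Finset.Ico_add_one_right_eq_Icc]
    have htel : ∑ m ∈ Finset.Icc 2 n,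
        ((fun j => -(((j:ℕ):ℝ) ^ (a+1))) m - (fun j => -(((j:ℕ):ℝ) ^ (a+1))) (m-1))
        = 1 - (n:ℝ) ^ (a+1) := by
      rw [sum_Icc_telescope' (fun j => -(((j:ℕ):ℝ) ^ (a+1))) (by omega) (by omega)]
      norm_num
      ring
    have hterm : ∀ m ∈ Finset.Icc 2 n, (m:ℝ) ^ a
        ≤ (1/(-(a+1))) * (-(((m:ℕ):ℝ) ^ (a+1)) - -(((m-1:ℕ):ℝ) ^ (a+1))) := by
      intro m hm
      rw [Finset.mem_Icc] at hm
      have h := rpow_telescope_neg ha hm.1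
      calc (m:ℝ) ^ a = (1/(-(a+1))) * ((-(a+1)) * (m:ℝ) ^ a) := by
            rw [one_div]
            exact (inv_mul_cancel_left₀ (by linarith : -(a+1) ≠ 0) _).symm
        _ ≤ (1/(-(a+1))) * (-(((m:ℕ):ℝ) ^ (a+1)) - -(((m-1:ℕ):ℝ) ^ (a+1))) := by
            apply mul_le_mul_of_nonneg_left _ (by positivity)
            linarith [h]
    have hsum : ∑ m ∈ Finset.Icc 2 n, (m:ℝ) ^ a ≤ (1/(-(a+1))) * (1 - (n:ℝ) ^ (a+1)) := by
      calc ∑ m ∈ Finset.Icc 2 n, (m:ℝ) ^ a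
          ≤ ∑ m ∈ Finset.Icc 2 n,
              (1/(-(a+1))) * (-(((m:ℕ):ℝ) ^ (a+1)) - -(((m-1:ℕ):ℝ) ^ (a+1))) :=
            Finset.sum_le_sum hterm
        _ = (1/(-(a+1))) * (1 - (n:ℝ) ^ (a+1)) := by rw [← Finset.mul_sum, htel]
    have h1 : ((1:ℕ):ℝ) ^ a = 1 := by norm_num
    rw [h1]
    have hpos : (0:ℝ) ≤ (n:ℝ) ^ (a+1) := Real.rpow_nonneg (by positivity) _
    have : (1/(-(a+1))) * (1 - (n:ℝ) ^ (a+1)) ≤ 1/(-(a+1)) := by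
      apply mul_le_of_le_one_right (by positivity)
      linarith
    linarith [hsum]

lemma upper_C {a : ℝ} (ha : a < -1) (p : ℕ) :
    ∃ C : ℝ, 0 < C ∧ ∀ n : ℕ,
      ∑ m ∈ Finset.Icc 1 n, (m : ℝ) ^ a * Real.log m ^ p ≤ C := by
  have hc : 0 < -(a+1) := by linarith
  set δ : ℝ := (-(a+1))/(2*((p:ℝ)+1)) with hδdef
  have hδ : 0 < δ := by positivity
  set a' : ℝ := a + δ * p with ha'def
  have hδp : δ * p ≤ -(a+1)/2 := by
    have h1 : δ * p ≤ δ * ((p:ℝ)+1) := by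
      apply mul_le_mul_of_nonneg_left (by linarith : (p:ℝ) ≤ (p:ℝ)+1) hδ.le
    have h2 : δ * ((p:ℝ)+1) = -(a+1)/2 := by
      rw [hδdef]; field_simp
    linarith
  have ha' : a' < -1 := by
    rw [ha'def]
    have : -(a+1)/2 < -(a+1) := by linarith
    linarith
  have hca' : (0:ℝ) < -(a'+1) := by linarith
  refine ⟨(1/δ)^p * (1 + 1/(-(a'+1))), by positivity, ?_⟩
  intro n
  have hterm : ∀ m ∈ Finset.Icc 1 n, (m:ℝ) ^ a * Real.log m ^ p ≤ (1/δ)^p * (m:ℝ) ^ a' := by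
    intro m hm
    rw [Finset.mem_Icc] at hm
    have hm1 : (1:ℝ) ≤ m := by exact_mod_cast hm.1
    have hm0 : (0:ℝ) < m := by linarith
    have hlog : Real.log m ≤ (m:ℝ) ^ δ / δ := log_le_rpow_div hδ hm1
    have hlp : Real.log m ^ p ≤ ((m:ℝ) ^ δ / δ) ^ p :=
      pow_le_pow_left₀ (Real.log_nonneg hm1) hlog p
    have hrp : ((m:ℝ) ^ δ) ^ p = (m:ℝ) ^ (δ * (p:ℝ)) := by
      rw [← Real.rpow_natCast ((m:ℝ) ^ δ) p, ← Real.rpow_mul hm0.le]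
    have hsplit : ((m:ℝ) ^ δ / δ) ^ p = (1/δ)^p * (m:ℝ) ^ (δ * (p:ℝ)) := by
      rw [div_eq_mul_one_div, mul_pow, hrp]; ring
    calc (m:ℝ) ^ a * Real.log m ^ p
        ≤ (m:ℝ) ^ a * ((1/δ)^p * (m:ℝ) ^ (δ * (p:ℝ))) := by
          apply mul_le_mul_of_nonneg_left _ (Real.rpow_nonneg hm0.le _)
          rw [← hsplit]; exact hlp
      _ = (1/δ)^p * (m:ℝ) ^ a' := by
          rw [ha'def, Real.rpow_add hm0]; ring
  calc ∑ m ∈ Finset.Icc 1 n, (m:ℝ) ^ a * Real.log m ^ p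
      ≤ ∑ m ∈ Finset.Icc 1 n, (1/δ)^p * (m:ℝ) ^ a' := Finset.sum_le_sum hterm
    _ = (1/δ)^p * ∑ m ∈ Finset.Icc 1 n, (m:ℝ) ^ a' := by rw [Finset.mul_sum]
    _ ≤ (1/δ)^p * (1 + 1/(-(a'+1))) := by
        apply mul_le_mul_of_nonneg_left (upper_sum_rpow_neg ha' n) (by positivity)

lemma lower_A (a : ℝ) (p : ℕ) (n₁ : ℕ) :
    ∃ c : ℝ, 0 < c ∧ ∀ n : ℕ, max (2 * n₁) 4 ≤ n →
      c * ((n:ℝ) ^ (a + 1) * Real.log n ^ p)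
        ≤ ∑ m ∈ Finset.Icc n₁ n, (m : ℝ) ^ a * Real.log m ^ p := by
  set μ : ℝ := min ((2:ℝ) ^ (-a)) 1 with hμ
  have hμpos : 0 < μ := lt_min (Real.rpow_pos_of_pos two_pos _) one_pos
  refine ⟨μ / (2 * 2 ^ p), by positivity, ?_⟩
  intro n hn
  rw [max_le_iff] at hn
  obtain ⟨hn1, hn4⟩ := hn
  set K : ℕ := n / 2 + 1 with hK
  have hKn₁ : n₁ ≤ K := by omega
  have hKn : K ≤ n := by omega
  have hnn : (0:ℝ) < n := by exact_mod_cast by omega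
  have hlogn : 0 ≤ Real.log n := Real.log_nonneg (by exact_mod_cast by omega : (1:ℝ) ≤ n)
  have hb0 : 0 ≤ μ * (n:ℝ) ^ a * (Real.log n / 2) ^ p := by positivity
  have hterm : ∀ m ∈ Finset.Icc K n,
      μ * (n:ℝ) ^ a * (Real.log n / 2) ^ p ≤ (m:ℝ) ^ a * Real.log m ^ p := by
    intro m hm
    rw [Finset.mem_Icc] at hm
    have hm2 : n < 2 * m := by omega
    have hm2' : (n:ℝ) / 2 ≤ (m:ℝ) := by
      have : (n:ℝ) < 2 * m := by exact_mod_cast hm2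
      linarith
    have hmn : (m:ℝ) ≤ (n:ℝ) := by exact_mod_cast hm.2
    have hm0 : (0:ℝ) < m := by linarith [hnn.le.trans (by linarith : (n:ℝ) ≤ 2*m)]; 
    have hsqrt : Real.sqrt n ≤ (n:ℝ) / 2 := by
      have h4 : (4:ℝ) ≤ n := by exact_mod_cast hn4
      have : (n:ℝ) ≤ ((n:ℝ)/2) ^ 2 := by nlinarith
      calc Real.sqrt n ≤ Real.sqrt (((n:ℝ)/2)^2) := Real.sqrt_le_sqrt this
        _ = (n:ℝ)/2 := Real.sqrt_sq (by positivity)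
    have hlogm : Real.log n / 2 ≤ Real.log m := by
      rw [← Real.log_sqrt hnn.le]
      apply Real.log_le_log (Real.sqrt_pos.2 hnn) (hsqrt.trans hm2')
    have hpowlog : (Real.log n / 2) ^ p ≤ Real.log m ^ p :=
      pow_le_pow_left₀ (by positivity) hlogm p
    have hrpow : μ * (n:ℝ) ^ a ≤ (m:ℝ) ^ a := by
      rcases le_or_gt 0 a with ha0 | ha0
      · have h1 : ((n:ℝ)/2) ^ a ≤ (m:ℝ) ^ a := Real.rpow_le_rpow (by positivity) hm2' ha0
        have h2 : ((n:ℝ)/2) ^ a = (n:ℝ) ^ a * (2:ℝ) ^ (-a) := by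
          rw [Real.div_rpow hnn.le (by norm_num : (0:ℝ) ≤ 2), Real.rpow_neg (by norm_num : (0:ℝ) ≤ 2)]
          ring
        have h3 : μ ≤ (2:ℝ) ^ (-a) := min_le_left _ _
        have h4 : 0 ≤ (n:ℝ) ^ a := Real.rpow_nonneg hnn.le _
        nlinarith [h1, h2, h3, h4]
      · have h1 : (n:ℝ) ^ a ≤ (m:ℝ) ^ a := Real.rpow_le_rpow_of_nonpos hm0 hmn ha0.le
        have h3 : μ ≤ 1 := min_le_right _ _
        have h4 : 0 ≤ (n:ℝ) ^ a := Real.rpow_nonneg hnn.le _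
        nlinarith [h1, h3, h4]
    calc μ * (n:ℝ) ^ a * (Real.log n / 2) ^ p
        ≤ (m:ℝ) ^ a * (Real.log n / 2) ^ p := by
          apply mul_le_mul_of_nonneg_right hrpow (by positivity)
      _ ≤ (m:ℝ) ^ a * Real.log m ^ p := by
          apply mul_le_mul_of_nonneg_left hpowlog (Real.rpow_nonneg hm0.le _)
  have hcard : (n:ℝ) / 2 ≤ ((Finset.Icc K n).card : ℕ) := by
    rw [Nat.card_Icc]
    have : n ≤ 2 * (n + 1 - K) := by omega
    have h2 : (n:ℝ) ≤ 2 * ((n + 1 - K : ℕ) : ℝ) := by exact_mod_cast this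
    linarith
  have hsum : ((Finset.Icc K n).card) • (μ * (n:ℝ) ^ a * (Real.log n / 2) ^ p)
      ≤ ∑ m ∈ Finset.Icc K n, (m:ℝ) ^ a * Real.log m ^ p :=
    Finset.card_nsmul_le_sum _ _ _ hterm
  rw [nsmul_eq_mul] at hsum
  have hmono : ∑ m ∈ Finset.Icc K n, (m:ℝ) ^ a * Real.log m ^ p
      ≤ ∑ m ∈ Finset.Icc n₁ n, (m:ℝ) ^ a * Real.log m ^ p := by
    apply Finset.sum_le_sum_of_subset_of_nonneg (Finset.Icc_subset_Icc hKn₁ le_rfl)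
    intro i _ _
    exact mul_nonneg (Real.rpow_nonneg (Nat.cast_nonneg _) _)
      (pow_nonneg (Real.log_natCast_nonneg _) _)
  have hfinal : μ / (2 * 2 ^ p) * ((n:ℝ) ^ (a + 1) * Real.log n ^ p)
      ≤ ((Finset.Icc K n).card : ℝ) * (μ * (n:ℝ) ^ a * (Real.log n / 2) ^ p) := by
    have hx : (n:ℝ) ^ (a+1) = (n:ℝ) ^ a * n := by
      rw [Real.rpow_add_one (ne_of_gt hnn)]
    have heq : μ / (2 * 2 ^ p) * ((n:ℝ) ^ (a + 1) * Real.log n ^ p)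
        = ((n:ℝ)/2) * (μ * (n:ℝ) ^ a * (Real.log n / 2) ^ p) := by
      rw [hx, div_pow]
      field_simp
    rw [heq]
    exact mul_le_mul_of_nonneg_right hcard hb0
  calc μ / (2 * 2 ^ p) * ((n:ℝ) ^ (a + 1) * Real.log n ^ p)
      ≤ ((Finset.Icc K n).card : ℝ) * (μ * (n:ℝ) ^ a * (Real.log n / 2) ^ p) := hfinal
    _ ≤ ∑ m ∈ Finset.Icc K n, (m:ℝ) ^ a * Real.log m ^ p := hsum
    _ ≤ ∑ m ∈ Finset.Icc n₁ n, (m:ℝ) ^ a * Real.log m ^ p := hmono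

lemma lower_B (p : ℕ) (n₁ : ℕ) :
    ∃ c : ℝ, 0 < c ∧ ∀ n : ℕ, max (n₁ * n₁) 16 ≤ n →
      c * Real.log n ^ (p + 1) ≤ ∑ m ∈ Finset.Icc n₁ n, (m : ℝ) ^ (-1:ℝ) * Real.log m ^ p := by
  refine ⟨1 / (4 * 2 ^ p), by positivity, ?_⟩
  intro n hn
  rw [max_le_iff] at hn
  obtain ⟨hns, hn16⟩ := hn
  set K : ℕ := Nat.sqrt n + 1 with hK
  have hKn₁ : n₁ ≤ K := by
    have := Nat.le_sqrt.2 hns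
    omega
  have hKn : K ≤ n := by
    have := Nat.sqrt_lt_self (by omega : 1 < n)
    omega
  have hnn : (0:ℝ) < n := by exact_mod_cast by omega
  have hn1 : (1:ℝ) ≤ n := by exact_mod_cast by omega
  have hlogn : 0 ≤ Real.log n := Real.log_nonneg hn1
  have hsqrtK : Real.sqrt n ≤ (K:ℝ) := by
    have h1 : (n:ℕ) < K * K := Nat.lt_succ_sqrt n
    have h2 : (n:ℝ) ≤ (K:ℝ) * (K:ℝ) := by exact_mod_cast h1.le
    calc Real.sqrt n ≤ Real.sqrt ((K:ℝ) * (K:ℝ)) := Real.sqrt_le_sqrt h2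
      _ = (K:ℝ) := Real.sqrt_mul_self (by positivity)
  have hterm : ∀ m ∈ Finset.Icc K n,
      (Real.log (m+1) - Real.log m) * (Real.log n ^ p / 2 ^ p)
        ≤ (m:ℝ) ^ (-1:ℝ) * Real.log m ^ p := by
    intro m hm
    rw [Finset.mem_Icc] at hm
    have hm1 : 1 ≤ m := by omega
    have hm0 : (0:ℝ) < m := by exact_mod_cast hm1
    have hgap : Real.log (m+1) - Real.log m ≤ 1/(m:ℝ) := log_succ_sub_le hm1
    have hgap0 : 0 ≤ Real.log (m+1) - Real.log m := by
      have : Real.log m ≤ Real.log (m+1) := Real.log_le_log hm0 (by linarith)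
      linarith
    have hlogm : Real.log n / 2 ≤ Real.log m := by
      rw [← Real.log_sqrt hnn.le]
      apply Real.log_le_log (Real.sqrt_pos.2 hnn)
      calc Real.sqrt n ≤ (K:ℝ) := hsqrtK
        _ ≤ (m:ℝ) := by exact_mod_cast hm.1
    have hpowlog : Real.log n ^ p / 2 ^ p ≤ Real.log m ^ p := by
      rw [← div_pow]
      exact pow_le_pow_left₀ (by positivity) hlogm p
    have hrw : (m:ℝ) ^ (-1:ℝ) = 1/(m:ℝ) := by
      rw [Real.rpow_neg_one]; exact inv_eq_one_div _
    rw [hrw]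
    apply mul_le_mul hgap hpowlog (by positivity) (by positivity)
  have htel : ∑ m ∈ Finset.Icc K n, (Real.log (m+1) - Real.log m)
      = Real.log (n+1) - Real.log K := by
    have := sum_Icc_telescope (fun j => Real.log j) (by omega : K ≤ n + 1)
    simpa using this
  have hlogK : Real.log K ≤ Real.log 2 + Real.log n / 2 := by
    have hKle : (K:ℝ) ≤ 2 * Real.sqrt n := by
      have h1 : ((Nat.sqrt n : ℕ) : ℝ) ≤ Real.sqrt n := by
        rw [show ((Nat.sqrt n : ℕ) : ℝ) = Real.sqrt (((Nat.sqrt n : ℕ) : ℝ)^2) by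
          rw [Real.sqrt_sq (by positivity)]]
        apply Real.sqrt_le_sqrt
        have := Nat.sqrt_le' n
        exact_mod_cast by nlinarith [Nat.sqrt_le' n]
      have h2 : (1:ℝ) ≤ Real.sqrt n := by
        rw [show (1:ℝ) = Real.sqrt 1 by rw [Real.sqrt_one]]
        exact Real.sqrt_le_sqrt hn1
      rw [hK]
      push_cast
      linarith
    calc Real.log K ≤ Real.log (2 * Real.sqrt n) := by
          apply Real.log_le_log (by positivity) hKle
      _ = Real.log 2 + Real.log n / 2 := by
          rw [Real.log_mul (by norm_num) (by positivity), Real.log_sqrt hnn.le]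
  have hlog2 : Real.log 2 ≤ Real.log n / 4 := by
    have h16 : ((16:ℕ):ℝ) ≤ n := by exact_mod_cast hn16
    have : Real.log 16 ≤ Real.log n := by
      apply Real.log_le_log (by norm_num)
      exact_mod_cast h16
    have h4 : Real.log 16 = 4 * Real.log 2 := by
      rw [show (16:ℝ) = 2^4 by norm_num, Real.log_pow]
      push_cast; ring
    linarith
  have hlogsum : Real.log n / 4 ≤ Real.log (n+1) - Real.log K := by
    have h1 : Real.log n ≤ Real.log (n+1) := Real.log_le_log hnn (by linarith)
    linarith
  calc 1 / (4 * 2^p) * Real.log n ^ (p+1)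
      = (Real.log n / 4) * (Real.log n ^ p / 2 ^ p) := by
        rw [pow_succ]
        field_simp
    _ ≤ (Real.log (n+1) - Real.log K) * (Real.log n ^ p / 2 ^ p) := by
        apply mul_le_mul_of_nonneg_right hlogsum (by positivity)
    _ = ∑ m ∈ Finset.Icc K n, (Real.log (m+1) - Real.log m) * (Real.log n ^ p / 2 ^ p) := by
        rw [← Finset.sum_mul, htel]
    _ ≤ ∑ m ∈ Finset.Icc K n, (m:ℝ) ^ (-1:ℝ) * Real.log m ^ p := Finset.sum_le_sum hterm
    _ ≤ ∑ m ∈ Finset.Icc n₁ n, (m:ℝ) ^ (-1:ℝ) * Real.log m ^ p := by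
        apply Finset.sum_le_sum_of_subset_of_nonneg (Finset.Icc_subset_Icc hKn₁ le_rfl)
        intro i _ _
        exact mul_nonneg (Real.rpow_nonneg (Nat.cast_nonneg _) _)
          (pow_nonneg (Real.log_natCast_nonneg _) _)

lemma lower_C (a : ℝ) (p : ℕ) (n₁ : ℕ) (hn₁ : 2 ≤ n₁) :
    ∃ c : ℝ, 0 < c ∧ ∀ n : ℕ, n₁ ≤ n →
      c ≤ ∑ m ∈ Finset.Icc n₁ n, (m : ℝ) ^ a * Real.log m ^ p := by
  have hpos : (0:ℝ) < (n₁:ℝ) ^ a * Real.log n₁ ^ p := by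
    apply mul_pos (Real.rpow_pos_of_pos (by exact_mod_cast by omega) _)
    apply pow_pos
    apply Real.log_pos
    exact_mod_cast by omega
  refine ⟨(n₁:ℝ) ^ a * Real.log n₁ ^ p, hpos, ?_⟩
  intro n hn
  apply Finset.single_le_sum (f := fun m : ℕ => (m:ℝ) ^ a * Real.log m ^ p) ?_
    (Finset.mem_Icc.2 ⟨le_rfl, hn⟩)
  intro i _
  exact mul_nonneg (Real.rpow_nonneg (Nat.cast_nonneg _) _)
    (pow_nonneg (Real.log_natCast_nonneg _) _)

lemma main_nat (k : ℕ) (β : ℕ → ℝ) :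
    ∃ c₁ c₂ : ℝ, ∃ n₀ : ℕ, 0 < c₁ ∧ 0 < c₂ ∧ 2 ≤ n₀ ∧ ∀ n : ℕ, n₀ ≤ n →
      c₁ * ((n:ℝ) ^ ((k:ℝ) + maxB k β) * Real.log n ^ (numMax k β - 1)) ≤ Tsum k n β ∧
      Tsum k n β ≤ c₂ * ((n:ℝ) ^ ((k:ℝ) + maxB k β) * Real.log n ^ (numMax k β - 1)) := by
  induction k with
  | zero =>
    refine ⟨1, 1, 2, one_pos, one_pos, le_rfl, ?_⟩
    intro n hn
    rw [Tsum_zero, maxB_zero, numMax_zero]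
    norm_num
  | succ k ih =>
    obtain ⟨c₁, c₂, n₀, hc₁, hc₂, hn₀2, hbound⟩ := ih
    set b := β (k+1) with hbdef
    obtain ⟨e, he⟩ : ∃ x : ℝ, x = (k:ℝ) + maxB k β := ⟨_, rfl⟩
    obtain ⟨p, hp⟩ : ∃ x : ℕ, x = numMax k β - 1 := ⟨_, rfl⟩
    obtain ⟨a, ha⟩ : ∃ x : ℝ, x = b + e := ⟨_, rfl⟩
    rw [← he, ← hp] at hbound
    have he0 : 0 ≤ e := he ▸ k_add_maxB_nonneg k β
    have hp1 : numMax k β = p + 1 := by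
      have := numMax_pos k β; omega
    have hTn₀ : 0 ≤ Tsum k n₀ β := Tsum_nonneg _ _ _
    have hlog2 : (0:ℝ) < Real.log 2 := Real.log_pos (by norm_num)
    set c₃ : ℝ := max c₂ ((Tsum k n₀ β + 1) / Real.log 2 ^ p) with hc₃
    have hc₃pos : 0 < c₃ := lt_of_lt_of_le hc₂ (le_max_left _ _)
    -- uniform per-term upper bound
    have huniform : ∀ m : ℕ, 1 ≤ m → Tsum k (m-1) β ≤ c₃ * ((m:ℝ) ^ e * Real.log m ^ p) := by
      intro m hm
      by_cases hm1 : m = 1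
      · subst hm1
        rcases Nat.eq_zero_or_pos k with hk0 | hk0
        · subst hk0
          rw [Tsum_zero]
          have hp0 : p = 0 := by rw [hp, numMax_zero]
          have h2 : ((Tsum 0 n₀ β + 1) / Real.log 2 ^ p) ≤ c₃ := le_max_right _ _
          rw [Tsum_zero, hp0, pow_zero, div_one] at h2
          rw [hp0, pow_zero, mul_one, Nat.cast_one, Real.one_rpow, mul_one]
          linarith
        · rw [Tsum_zero_right hk0]
          apply mul_nonneg hc₃pos.le
          apply mul_nonneg (Real.rpow_nonneg (by norm_num) _)
          apply pow_nonneg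
          exact Real.log_natCast_nonneg _
      · have hm2 : 2 ≤ m := by omega
        have hmpos : (0:ℝ) < m := by exact_mod_cast by omega
        have hlogm : Real.log 2 ≤ Real.log m := Real.log_le_log (by norm_num) (by exact_mod_cast hm2)
        have hlogm0 : 0 ≤ Real.log (m:ℝ) := hlog2.le.trans hlogm
        have h1e : (1:ℝ) ≤ (m:ℝ)^e := by
          calc (1:ℝ) = (1:ℝ)^e := (Real.one_rpow _).symm
            _ ≤ (m:ℝ)^e := Real.rpow_le_rpow zero_le_one (by exact_mod_cast (by omega : 1 ≤ m)) he0
        have hgoal0 : 0 ≤ (m:ℝ)^e * Real.log m ^ p :=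
          mul_nonneg (Real.rpow_nonneg hmpos.le _) (pow_nonneg hlogm0 _)
        rcases Nat.lt_or_ge (m-1) n₀ with hsmall | hbig
        · have hTle : Tsum k (m-1) β ≤ Tsum k n₀ β := Tsum_mono k β (by omega)
          have hD : (Tsum k n₀ β + 1) / Real.log 2 ^ p * Real.log 2 ^ p = Tsum k n₀ β + 1 := by
            field_simp
          calc Tsum k (m-1) β ≤ Tsum k n₀ β + 1 := by linarith
            _ = ((Tsum k n₀ β + 1)/Real.log 2 ^ p) * Real.log 2 ^ p := hD.symm
            _ ≤ c₃ * ((m:ℝ)^e * Real.log m ^ p) := by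
                apply mul_le_mul (le_max_right _ _) ?_ (pow_nonneg hlog2.le _) hc₃pos.le
                calc Real.log 2 ^ p ≤ Real.log (m:ℝ) ^ p := pow_le_pow_left₀ hlog2.le hlogm p
                  _ ≤ (m:ℝ)^e * Real.log m ^ p :=
                      le_mul_of_one_le_left (pow_nonneg hlogm0 p) h1e
        · have hb := (hbound (m-1) hbig).2
          have hcast : ((m-1:ℕ):ℝ) ≤ (m:ℝ) := by exact_mod_cast (by omega : m - 1 ≤ m)
          have hcast0 : (0:ℝ) < ((m-1:ℕ):ℝ) := by exact_mod_cast (by omega : 0 < m - 1)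
          have h1 : ((m-1:ℕ):ℝ)^e ≤ (m:ℝ)^e := Real.rpow_le_rpow hcast0.le hcast he0
          have hlogc : Real.log ((m-1:ℕ):ℝ) ≤ Real.log (m:ℝ) := Real.log_le_log hcast0 hcast
          have h2 : Real.log ((m-1:ℕ):ℝ) ^ p ≤ Real.log (m:ℝ) ^ p :=
            pow_le_pow_left₀ (Real.log_natCast_nonneg _) hlogc p
          calc Tsum k (m-1) β ≤ c₂ * (((m-1:ℕ):ℝ)^e * Real.log ((m-1:ℕ):ℝ) ^ p) := hb
            _ ≤ c₂ * ((m:ℝ)^e * Real.log m ^ p) := by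
                apply mul_le_mul_of_nonneg_left _ hc₂.le
                apply mul_le_mul h1 h2 (pow_nonneg (Real.log_natCast_nonneg _) _)
                  (Real.rpow_nonneg hmpos.le _)
            _ ≤ c₃ * ((m:ℝ)^e * Real.log m ^ p) :=
                mul_le_mul_of_nonneg_right (le_max_left _ _) hgoal0
    -- global upper bound via the sum lemma
    have hupper : ∀ n : ℕ, 1 ≤ n →
        Tsum (k+1) n β ≤ c₃ * ∑ m ∈ Finset.Icc 1 n, (m:ℝ)^a * Real.log m ^ p := by
      intro n hn
      rw [Tsum_succ]
      calc ∑ m ∈ Finset.Icc 1 n, (m:ℝ)^b * Tsum k (m-1) β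
          ≤ ∑ m ∈ Finset.Icc 1 n, (m:ℝ)^b * (c₃ * ((m:ℝ)^e * Real.log m ^ p)) := by
            apply Finset.sum_le_sum
            intro m hm
            rw [Finset.mem_Icc] at hm
            exact mul_le_mul_of_nonneg_left (huniform m hm.1) (Real.rpow_nonneg (Nat.cast_nonneg _) _)
        _ = c₃ * ∑ m ∈ Finset.Icc 1 n, (m:ℝ)^a * Real.log m ^ p := by
            rw [Finset.mul_sum]
            apply Finset.sum_congr rfl
            intro m hm
            rw [Finset.mem_Icc] at hm
            have hm0 : (0:ℝ) < m := by exact_mod_cast hm.1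
            rw [ha, Real.rpow_add hm0]
            ring
    -- global lower bound via the sum over [n₁, n]
    set n₁ : ℕ := max (n₀+1) 4 with hn₁def
    have hn₁2 : 2 ≤ n₁ := by omega
    set c₄ : ℝ := c₁ / ((2:ℝ)^e * 2^p) with hc₄def
    have hc₄pos : 0 < c₄ := by
      apply div_pos hc₁
      exact mul_pos (Real.rpow_pos_of_pos two_pos _) (by positivity)
    have hlower : ∀ n : ℕ, n₁ ≤ n →
        c₄ * ∑ m ∈ Finset.Icc n₁ n, (m:ℝ)^a * Real.log m ^ p ≤ Tsum (k+1) n β := by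
      intro n hn
      rw [Tsum_succ]
      have hterm : ∀ m ∈ Finset.Icc n₁ n,
          c₄ * ((m:ℝ)^a * Real.log m ^ p) ≤ (m:ℝ)^b * Tsum k (m-1) β := by
        intro m hm
        rw [Finset.mem_Icc] at hm
        have hm4 : 4 ≤ m := le_trans (le_max_right _ _) hm.1
        have hmn₀ : n₀ ≤ m - 1 := by
          have : n₀ + 1 ≤ m := le_trans (le_max_left _ _) hm.1
          omega
        have hlow := (hbound (m-1) hmn₀).1
        have hm0 : (0:ℝ) < m := by exact_mod_cast by omega
        have hm4R : (4:ℝ) ≤ m := by exact_mod_cast hm4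
        have hmr : ((m-1:ℕ):ℝ) = (m:ℝ) - 1 := by
          have h1 : (1:ℕ) ≤ m := by omega
          push_cast [h1]
          ring
        have h1 : (m:ℝ)/2 ≤ ((m-1:ℕ):ℝ) := by rw [hmr]; linarith
        have h2 : (m:ℝ)^e / 2^e ≤ ((m-1:ℕ):ℝ)^e := by
          rw [← Real.div_rpow hm0.le (by norm_num)]
          exact Real.rpow_le_rpow (by positivity) h1 he0
        have h3 : Real.log m / 2 ≤ Real.log ((m-1:ℕ):ℝ) := by
          rw [← Real.log_sqrt hm0.le]
          apply Real.log_le_log (Real.sqrt_pos.2 hm0)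
          rw [hmr]
          have hsq : (m:ℝ) ≤ ((m:ℝ)-1)^2 := by nlinarith
          calc Real.sqrt m ≤ Real.sqrt (((m:ℝ)-1)^2) := Real.sqrt_le_sqrt hsq
            _ = (m:ℝ)-1 := Real.sqrt_sq (by linarith)
        have hlogm0 : 0 ≤ Real.log (m:ℝ) := Real.log_nonneg (by linarith)
        have h4 : Real.log (m:ℝ) ^ p / 2^p ≤ Real.log ((m-1:ℕ):ℝ) ^ p := by
          rw [← div_pow]
          exact pow_le_pow_left₀ (by positivity) h3 p
        have h5 : c₁ * ((m:ℝ)^e/2^e * (Real.log (m:ℝ) ^ p / 2^p)) ≤ Tsum k (m-1) β := by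
          apply le_trans _ hlow
          apply mul_le_mul_of_nonneg_left _ hc₁.le
          apply mul_le_mul h2 h4 (by positivity) (Real.rpow_nonneg (Nat.cast_nonneg _) _)
        calc c₄ * ((m:ℝ)^a * Real.log m ^ p)
            = (m:ℝ)^b * (c₁ * ((m:ℝ)^e/2^e * (Real.log (m:ℝ) ^ p/2^p))) := by
              rw [hc₄def, ha, Real.rpow_add hm0]
              have hpow2 : (0:ℝ) < (2:ℝ)^e := Real.rpow_pos_of_pos two_pos _
              field_simp
          _ ≤ (m:ℝ)^b * Tsum k (m-1) β := mul_le_mul_of_nonneg_left h5 (Real.rpow_nonneg hm0.le _)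
      calc c₄ * ∑ m ∈ Finset.Icc n₁ n, (m:ℝ)^a * Real.log m ^ p
          = ∑ m ∈ Finset.Icc n₁ n, c₄ * ((m:ℝ)^a * Real.log m ^ p) := Finset.mul_sum _ _ _
        _ ≤ ∑ m ∈ Finset.Icc n₁ n, (m:ℝ)^b * Tsum k (m-1) β := Finset.sum_le_sum hterm
        _ ≤ ∑ m ∈ Finset.Icc 1 n, (m:ℝ)^b * Tsum k (m-1) β := by
            apply Finset.sum_le_sum_of_subset_of_nonneg (Finset.Icc_subset_Icc (by omega) le_rfl)
            intro i _ _
            exact mul_nonneg (Real.rpow_nonneg (Nat.cast_nonneg _) _) (Tsum_nonneg _ _ _)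
    -- now split into regimes
    have hrel0 : a + 1 = (maxB k β + b) + ((k:ℝ) + 1) := by rw [ha, he]; ring
    rcases lt_trichotomy (-1 : ℝ) a with hgt | heqa | hlt
    · -- regime 1
      have hrel : -((k:ℝ)+1) < maxB k β + b := by
        have : 0 < a + 1 := by linarith
        linarith [hrel0]
      have hB' : maxB (k+1) β = maxB k β + b := by
        rw [maxB_succ]; exact max_eq_left hrel.le
      have hr' : numMax (k+1) β = numMax k β := numMax_succ_gt k β hrel
      have hexp : ((k+1:ℕ):ℝ) + maxB (k+1) β = a + 1 := by
        rw [hB']; push_cast; rw [ha, he]; ring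
      obtain ⟨cL, hcL, hLA⟩ := lower_A a p n₁
      refine ⟨c₄ * cL, c₃ * (1 + 1/(a+1)), max (2*n₁) 4, mul_pos hc₄pos hcL,
        mul_pos hc₃pos (by have h0 : 0 < 1/(a+1) := one_div_pos.2 (by linarith); linarith), by omega, ?_⟩
      intro n hn
      have hn1 : 1 ≤ n := by omega
      have hnn₁ : n₁ ≤ n := by omega
      rw [hexp, hr', hp1]
      simp only [Nat.add_sub_cancel]
      constructor
      · calc c₄ * cL * ((n:ℝ)^(a+1) * Real.log n ^ p)
            = c₄ * (cL * ((n:ℝ)^(a+1) * Real.log n ^ p)) := by ring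
          _ ≤ c₄ * ∑ m ∈ Finset.Icc n₁ n, (m:ℝ)^a * Real.log m ^ p :=
              mul_le_mul_of_nonneg_left (hLA n hn) hc₄pos.le
          _ ≤ Tsum (k+1) n β := hlower n hnn₁
      · calc Tsum (k+1) n β ≤ c₃ * ∑ m ∈ Finset.Icc 1 n, (m:ℝ)^a * Real.log m ^ p := hupper n hn1
          _ ≤ c₃ * ((1 + 1/(a+1)) * ((n:ℝ)^(a+1) * Real.log n ^ p)) :=
              mul_le_mul_of_nonneg_left (upper_A hgt p hn1) hc₃pos.le
          _ = c₃ * (1 + 1/(a+1)) * ((n:ℝ)^(a+1) * Real.log n ^ p) := by ring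
    · -- regime 2 : a = -1
      have hrel : maxB k β + b = -((k:ℝ)+1) := by
        have : a + 1 = 0 := by linarith
        linarith [hrel0]
      have hB' : maxB (k+1) β = -((k:ℝ)+1) := by
        rw [maxB_succ, hrel]; exact max_self _
      have hr' : numMax (k+1) β = numMax k β + 1 := numMax_succ_eq k β hrel
      have hexp : ((k+1:ℕ):ℝ) + maxB (k+1) β = 0 := by
        rw [hB']; push_cast; ring
      obtain ⟨cL, hcL, hLB⟩ := lower_B p n₁
      refine ⟨c₄ * cL, c₃ * (2^(p+2)/((p:ℝ)+1)), max (n₁*n₁) 16, mul_pos hc₄pos hcL,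
        mul_pos hc₃pos (by positivity), by omega, ?_⟩
      intro n hn
      have hn2 : 2 ≤ n := by omega
      have hn1 : 1 ≤ n := by omega
      have hnn₁ : n₁ ≤ n := by nlinarith [le_trans (le_max_left (n₁*n₁) 16) hn]
      rw [hexp, hr', hp1, Real.rpow_zero, one_mul]
      simp only [Nat.add_sub_cancel]
      have hsumrw : ∀ s : Finset ℕ, ∑ m ∈ s, (m:ℝ)^a * Real.log m ^ p
          = ∑ m ∈ s, (m:ℝ)^(-1:ℝ) * Real.log m ^ p := by
        intro s; apply Finset.sum_congr rfl; intro m _; rw [← heqa]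
      constructor
      · calc c₄ * cL * Real.log n ^ (p+1)
            = c₄ * (cL * Real.log n ^ (p+1)) := by ring
          _ ≤ c₄ * ∑ m ∈ Finset.Icc n₁ n, (m:ℝ)^(-1:ℝ) * Real.log m ^ p :=
              mul_le_mul_of_nonneg_left (hLB n hn) hc₄pos.le
          _ = c₄ * ∑ m ∈ Finset.Icc n₁ n, (m:ℝ)^a * Real.log m ^ p := by rw [hsumrw]
          _ ≤ Tsum (k+1) n β := hlower n hnn₁
      · calc Tsum (k+1) n β ≤ c₃ * ∑ m ∈ Finset.Icc 1 n, (m:ℝ)^a * Real.log m ^ p := hupper n hn1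
          _ = c₃ * ∑ m ∈ Finset.Icc 1 n, (m:ℝ)^(-1:ℝ) * Real.log m ^ p := by rw [hsumrw]
          _ ≤ c₃ * (2^(p+2)/((p:ℝ)+1) * Real.log n ^ (p+1)) :=
              mul_le_mul_of_nonneg_left (upper_B p hn2) hc₃pos.le
          _ = c₃ * (2^(p+2)/((p:ℝ)+1)) * Real.log n ^ (p+1) := by ring
    · -- regime 3 : a < -1
      have hrel : maxB k β + b < -((k:ℝ)+1) := by
        have : a + 1 < 0 := by linarith
        linarith [hrel0]
      have hB' : maxB (k+1) β = -((k:ℝ)+1) := by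
        rw [maxB_succ]; exact max_eq_right hrel.le
      have hr' : numMax (k+1) β = 1 := numMax_succ_lt k β hrel
      have hexp : ((k+1:ℕ):ℝ) + maxB (k+1) β = 0 := by
        rw [hB']; push_cast; ring
      obtain ⟨CU, hCU, hCUb⟩ := upper_C hlt p
      obtain ⟨cL, hcL, hLC⟩ := lower_C a p n₁ hn₁2
      refine ⟨c₄ * cL, c₃ * CU, n₁, mul_pos hc₄pos hcL, mul_pos hc₃pos hCU, hn₁2, ?_⟩
      intro n hn
      have hn1 : 1 ≤ n := by omega
      rw [hexp, hr', Real.rpow_zero]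
      norm_num
      constructor
      · calc c₄ * cL ≤ c₄ * ∑ m ∈ Finset.Icc n₁ n, (m:ℝ)^a * Real.log m ^ p :=
            mul_le_mul_of_nonneg_left (hLC n hn) hc₄pos.le
          _ ≤ Tsum (k+1) n β := hlower n hn
      · calc Tsum (k+1) n β ≤ c₃ * ∑ m ∈ Finset.Icc 1 n, (m:ℝ)^a * Real.log m ^ p := hupper n hn1
          _ ≤ c₃ * CU := mul_le_mul_of_nonneg_left (hCUb n) hc₃pos.le

theorem subgraph_sum_asymptotics (k : ℕ) (hk : 1 ≤ k) (β : ℕ → ℝ) :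
    ∃ C₁ C₂ t₀ : ℝ, 0 < C₁ ∧ C₁ ≤ C₂ ∧ 2 ≤ t₀ ∧ ∀ t : ℝ, t₀ ≤ t →
      C₁ * t ^ ((k : ℝ) + maxB k β) * (Real.log t) ^ (numMax k β - 1) ≤
        (∑ i ∈ (Fintype.piFinset fun _ : Fin k => Finset.Icc 1 (Nat.floor t)).filter
            (fun i => StrictMono i),
          ∏ q : Fin k, (i q : ℝ) ^ β ((q : ℕ) + 1)) ∧
      (∑ i ∈ (Fintype.piFinset fun _ : Fin k => Finset.Icc 1 (Nat.floor t)).filter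
            (fun i => StrictMono i),
          ∏ q : Fin k, (i q : ℝ) ^ β ((q : ℕ) + 1)) ≤
        C₂ * t ^ ((k : ℝ) + maxB k β) * (Real.log t) ^ (numMax k β - 1) := by
  obtain ⟨c₁, c₂, n₀, hc₁, hc₂, hn₀2, hbound⟩ := main_nat k β
  obtain ⟨e, he⟩ : ∃ x : ℝ, x = (k:ℝ) + maxB k β := ⟨_, rfl⟩
  obtain ⟨p, hp⟩ : ∃ x : ℕ, x = numMax k β - 1 := ⟨_, rfl⟩
  rw [← he, ← hp] at hbound
  have he0 : 0 ≤ e := he ▸ k_add_maxB_nonneg k β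
  have h2e : (0:ℝ) < (2:ℝ)^e := Real.rpow_pos_of_pos two_pos _
  have h2p : (0:ℝ) < (2:ℝ)^p := by positivity
  set C₁ : ℝ := c₁ / ((2:ℝ)^e * 2^p) with hC₁
  have hC₁pos : 0 < C₁ := div_pos hc₁ (mul_pos h2e h2p)
  have hn₀R : (2:ℝ) ≤ (n₀:ℝ) := by exact_mod_cast hn₀2
  refine ⟨C₁, max c₂ C₁, (n₀:ℝ) + 1, hC₁pos, le_max_right _ _, by linarith, ?_⟩
  intro t ht
  have ht0 : (0:ℝ) < t := by linarith
  have ht1 : (1:ℝ) ≤ t := by linarith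
  set n : ℕ := Nat.floor t with hn
  have hnt : (n:ℝ) ≤ t := Nat.floor_le ht0.le
  have hn₀n : n₀ ≤ n := Nat.le_floor (by linarith)
  have hn2 : 2 ≤ n := le_trans hn₀2 hn₀n
  have hn0 : (0:ℝ) < n := by exact_mod_cast by omega
  have hn2R : (2:ℝ) ≤ n := by exact_mod_cast hn2
  have htn : t < n + 1 := Nat.lt_floor_add_one t
  have ht2n : t ≤ 2 * n := by linarith
  have hlogn0 : 0 ≤ Real.log n := Real.log_nonneg (by linarith)
  have hlogt0 : 0 ≤ Real.log t := Real.log_nonneg ht1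
  have hlogt : Real.log t ≤ 2 * Real.log n := by
    calc Real.log t ≤ Real.log ((n:ℝ) * n) := Real.log_le_log ht0 (by nlinarith)
      _ = 2 * Real.log n := by
          rw [Real.log_mul (by positivity) (by positivity)]; ring
  have hbd := hbound n hn₀n
  have hsum : Tsum k n β = ∑ i ∈ (Fintype.piFinset fun _ : Fin k =>
      Finset.Icc 1 n).filter (fun i => StrictMono i),
      ∏ q : Fin k, (i q : ℝ) ^ β ((q : ℕ) + 1) := rfl
  rw [← hsum, ← he, ← hp]
  constructor
  · have h1 : t^e ≤ (2:ℝ)^e * (n:ℝ)^e := by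
      calc t^e ≤ (2*(n:ℝ))^e := Real.rpow_le_rpow ht0.le ht2n he0
        _ = (2:ℝ)^e * (n:ℝ)^e := Real.mul_rpow (by norm_num) hn0.le
    have h2 : Real.log t ^ p ≤ 2^p * Real.log n ^ p := by
      calc Real.log t ^ p ≤ (2 * Real.log n)^p := pow_le_pow_left₀ hlogt0 hlogt p
        _ = 2^p * Real.log n ^ p := mul_pow _ _ _
    calc C₁ * t^e * Real.log t ^ p
        ≤ C₁ * ((2:ℝ)^e * (n:ℝ)^e) * (2^p * Real.log n ^ p) := by
          apply mul_le_mul (mul_le_mul_of_nonneg_left h1 hC₁pos.le) h2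
            (pow_nonneg hlogt0 _)
          exact mul_nonneg hC₁pos.le (mul_nonneg h2e.le (Real.rpow_nonneg hn0.le _))
      _ = c₁ * ((n:ℝ)^e * Real.log n ^ p) := by
          rw [hC₁]
          field_simp
      _ ≤ Tsum k n β := hbd.1
  · have h1 : (n:ℝ)^e ≤ t^e := Real.rpow_le_rpow hn0.le hnt he0
    have h2 : Real.log n ^ p ≤ Real.log t ^ p :=
      pow_le_pow_left₀ hlogn0 (Real.log_le_log hn0 hnt) p
    calc Tsum k n β ≤ c₂ * ((n:ℝ)^e * Real.log n ^ p) := hbd.2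
      _ ≤ c₂ * (t^e * Real.log t ^ p) := by
          apply mul_le_mul_of_nonneg_left
            (mul_le_mul h1 h2 (pow_nonneg hlogn0 _) (Real.rpow_nonneg ht0.le _)) hc₂.le
      _ ≤ max c₂ C₁ * (t^e * Real.log t ^ p) := by
          apply mul_le_mul_of_nonneg_right (le_max_left _ _)
          exact mul_nonneg (Real.rpow_nonneg ht0.le _) (pow_nonneg hlogt0 _)
      _ = max c₂ C₁ * t^e * Real.log t ^ p := by ring
end

section
/- Let k ≥ 1 be an integer and β(1),…,β(k) real numbers, with f, B and r as defined. Define for t ≥ 2 the iterated integral I(t) = ∫₁^t u₁^{β(1)} ( ∫_{u₁}^t u₂^{β(2)} ( ⋯ ( ∫_{u_{k−1}}^t u_k^{β(k)} du_k ) ⋯ ) du₂ ) du₁. Then there exists a constant C₂ < ∞ such that I(t) ≤ C₂ · t^{k+B} (log t)^{r−1} for all t ≥ 2. -/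
open Finset Real MeasureTheory intervalIntegral

/-- `nestInt β t n j a` is the iterated integral
`∫_a^t u_j^{β j} ( ∫_{u_j}^t u_{j+1}^{β (j+1)} ( ⋯ ) du_{j+1} ) du_j` with `n` integrals. -/
noncomputable def nestInt (β : ℕ → ℝ) (t : ℝ) : ℕ → ℕ → ℝ → ℝ
  | 0, _, _ => 1
  | n + 1, j, a => ∫ u in a..t, u ^ β j * nestInt β t n (j + 1) u

namespace NestAux

variable (β : ℕ → ℝ)

noncomputable def preS (j s : ℕ) : ℝ := ∑ i ∈ Finset.Ico j (j + s), (β i + 1)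

noncomputable def cutS (n j s : ℕ) : ℝ := ∑ i ∈ Finset.Ico (j + s) (j + n), (β i + 1)

noncomputable def mmS (n j s : ℕ) : ℕ :=
  ((Finset.Ioc s n).filter (fun s' => cutS β n j s' = cutS β n j s)).card

lemma preS_zero (j : ℕ) : preS β j 0 = 0 := by simp [preS]

lemma cutS_self (n j : ℕ) : cutS β n j n = 0 := by simp [cutS]

lemma preS_succ (j s : ℕ) : preS β j (s + 1) = (β j + 1) + preS β (j + 1) s := by
  unfold preS
  rw [show j + (s + 1) = (j + 1) + s by omega,
    Finset.sum_eq_sum_Ico_succ_bot (show j < (j + 1) + s by omega)]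

lemma cutS_shift (n j s : ℕ) : cutS β n (j + 1) s = cutS β (n + 1) j (s + 1) := by
  unfold cutS
  congr 1
  congr 1 <;> omega

lemma preS_add_cutS (n j s : ℕ) (h : s ≤ n) :
    preS β j s + cutS β n j s = cutS β n j 0 := by
  unfold preS cutS
  rw [Finset.sum_Ico_consecutive _ (by omega) (by omega)]
  simp

lemma mmS_shift (n j s : ℕ) : mmS β n (j + 1) s = mmS β (n + 1) j (s + 1) := by
  unfold mmS
  refine Finset.card_bij' (fun a _ => a + 1) (fun b _ => b - 1) ?_ ?_ ?_ ?_
  · intro a ha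
    simp only [Finset.mem_filter, Finset.mem_Ioc] at ha ⊢
    refine ⟨by omega, ?_⟩
    rw [← cutS_shift, ← cutS_shift]
    exact ha.2
  · intro b hb
    simp only [Finset.mem_filter, Finset.mem_Ioc] at hb ⊢
    obtain ⟨⟨hb1, hb2⟩, hb3⟩ := hb
    obtain ⟨c, rfl⟩ : ∃ c, b = c + 1 := ⟨b - 1, by omega⟩
    refine ⟨by omega, ?_⟩
    simpa [← cutS_shift] using hb3
  · intro a ha; rfl
  · intro b hb
    simp only [Finset.mem_filter, Finset.mem_Ioc] at hb
    show b - 1 + 1 = b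
    omega

lemma mmS_zero_le (n j s : ℕ) (hs : s ≤ n) (h : cutS β (n + 1) j (s + 1) = cutS β (n + 1) j 0) :
    mmS β n (j + 1) s + 1 ≤ mmS β (n + 1) j 0 := by
  rw [mmS_shift]
  unfold mmS
  have hsub : insert (s + 1)
      ((Finset.Ioc (s + 1) (n + 1)).filter
        (fun s' => cutS β (n + 1) j s' = cutS β (n + 1) j (s + 1))) ⊆
      (Finset.Ioc 0 (n + 1)).filter (fun s' => cutS β (n + 1) j s' = cutS β (n + 1) j 0) := by
    intro a ha
    rcases Finset.mem_insert.mp ha with rfl | ha'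
    · simp only [Finset.mem_filter, Finset.mem_Ioc]
      exact ⟨⟨by omega, by omega⟩, h⟩
    · simp only [Finset.mem_filter, Finset.mem_Ioc] at ha' ⊢
      exact ⟨⟨by omega, ha'.1.2⟩, by rw [ha'.2, h]⟩
  have hnotmem : s + 1 ∉ (Finset.Ioc (s + 1) (n + 1)).filter
      (fun s' => cutS β (n + 1) j s' = cutS β (n + 1) j (s + 1)) := by
    simp [Finset.mem_Ioc]
  calc _ = (insert (s + 1)
      ((Finset.Ioc (s + 1) (n + 1)).filter
        (fun s' => cutS β (n + 1) j s' = cutS β (n + 1) j (s + 1)))).card := by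
        rw [Finset.card_insert_of_notMem hnotmem]
    _ ≤ _ := Finset.card_le_card hsub

/-! ### kernel integral estimates -/

noncomputable def kern (x e : ℝ) (m : ℕ) (u : ℝ) : ℝ :=
  u ^ (e - 1) * (1 + (Real.log x - Real.log u)) ^ m

lemma kern_contOn (x e : ℝ) (m : ℕ) : ContinuousOn (kern x e m) (Set.Ioi 0) := by
  apply ContinuousOn.mul
  · exact ContinuousOn.rpow_const continuousOn_id (fun u hu => Or.inl (ne_of_gt hu))
  · apply ContinuousOn.pow
    apply ContinuousOn.add continuousOn_const
    apply ContinuousOn.sub continuousOn_const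
    exact Real.continuousOn_log.mono (fun u hu => ne_of_gt hu)

lemma kern_intble (x e : ℝ) (m : ℕ) {a b : ℝ} (ha : 0 < a) (hb : 0 < b) :
    IntervalIntegrable (kern x e m) volume a b := by
  apply ContinuousOn.intervalIntegrable
  apply (kern_contOn x e m).mono
  intro u hu
  exact lt_of_lt_of_le (lt_min ha hb) hu.1

lemma rpow_contOn (e : ℝ) : ContinuousOn (fun u : ℝ => u ^ e) (Set.Ioi 0) :=
  ContinuousOn.rpow_const continuousOn_id (fun u hu => Or.inl (ne_of_gt hu))

lemma rpow_intble (e : ℝ) {a b : ℝ} (ha : 0 < a) (hb : 0 < b) :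
    IntervalIntegrable (fun u : ℝ => u ^ e) volume a b := by
  apply ContinuousOn.intervalIntegrable
  apply (rpow_contOn e).mono
  intro u hu
  exact lt_of_lt_of_le (lt_min ha hb) hu.1

lemma integral_rpow_le_pos {c : ℝ} (hc : 0 < c) {a x : ℝ} (ha : 1 ≤ a) (hax : a ≤ x) :
    ∫ u in a..x, u ^ (c - 1) ≤ x ^ c / c := by
  rw [integral_rpow (Or.inl (by linarith))]
  have hc1 : c - 1 + 1 = c := by ring
  rw [hc1]
  have h1 : (0:ℝ) ≤ a ^ c := Real.rpow_nonneg (by linarith) _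
  gcongr
  linarith

lemma integral_rpow_le_neg {c : ℝ} (hc : c < 0) {a x : ℝ} (ha : 1 ≤ a) (hax : a ≤ x) :
    ∫ u in a..x, u ^ (c - 1) ≤ a ^ c / (-c) := by
  have h0 : (0:ℝ) ∉ Set.uIcc a x := by
    rw [Set.uIcc_of_le hax]
    intro h
    exact absurd h.1 (by linarith)
  rw [integral_rpow (Or.inr ⟨by intro hcc; linarith, h0⟩)]
  have hc1 : c - 1 + 1 = c := by ring
  rw [hc1]
  have hxc : (0:ℝ) ≤ x ^ c := Real.rpow_nonneg (by linarith) _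
  have heq : (x ^ c - a ^ c) / c = (a ^ c - x ^ c) / (-c) := by
    rw [div_eq_div_iff (by linarith) (by linarith)]
    ring
  rw [heq]
  gcongr
  · linarith
  · linarith

lemma log_le_log' {a x : ℝ} (ha : 0 < a) (hax : a ≤ x) : Real.log a ≤ Real.log x :=
  Real.log_le_log ha hax

lemma kern_mono_bound (x e : ℝ) (m : ℕ) {a u : ℝ} (ha : 1 ≤ a) (hax : a ≤ x)
    (hu : u ∈ Set.Icc a x) :
    kern x e m u ≤ u ^ (e - 1) * (1 + (Real.log x - Real.log u)) ^ m := le_rfl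

lemma one_le_base {a x : ℝ} (ha : 1 ≤ a) (hax : a ≤ x) :
    1 ≤ 1 + (Real.log x - Real.log a) := by
  have := log_le_log' (by linarith : (0:ℝ) < a) hax
  linarith

lemma kernel_zero (m : ℕ) : ∀ x a : ℝ, 1 ≤ a → a ≤ x →
    (∫ u in a..x, kern x 0 m u) ≤ (1 + (Real.log x - Real.log a)) ^ (m + 1) := by
  intro x a ha hax
  have ha0 : (0:ℝ) < a := by linarith
  have hx0 : (0:ℝ) < x := by linarith
  have hbase := one_le_base ha hax
  have step1 : (∫ u in a..x, kern x 0 m u) ≤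
      ∫ u in a..x, (1 + (Real.log x - Real.log a)) ^ m * u ^ ((0:ℝ) - 1) := by
    apply integral_mono_on hax (kern_intble x 0 m ha0 hx0)
    · exact (rpow_intble ((0:ℝ)-1) ha0 hx0).const_mul _
    · intro u hu
      obtain ⟨hu1, hu2⟩ := hu
      have hu0 : (0:ℝ) < u := by linarith
      rw [kern, mul_comm]
      apply mul_le_mul_of_nonneg_right ?_ (Real.rpow_nonneg hu0.le _)
      apply pow_le_pow_left₀ ?_ ?_ m
      · have := log_le_log' hu0 hu2
        linarith
      · have := log_le_log' ha0 hu1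
        linarith
  rw [intervalIntegral.integral_const_mul] at step1
  have step2 : (∫ u in a..x, u ^ ((0:ℝ) - 1)) = Real.log x - Real.log a := by
    have : ∀ u ∈ Set.uIcc a x, u ^ ((0:ℝ)-1) = u⁻¹ := by
      intro u hu
      rw [zero_sub, Real.rpow_neg_one]
    rw [intervalIntegral.integral_congr this, integral_inv_of_pos ha0 hx0,
      Real.log_div hx0.ne' ha0.ne']
  rw [step2] at step1
  apply step1.trans
  rw [pow_succ]
  apply mul_le_mul_of_nonneg_left ?_ (by positivity)
  linarith [log_le_log' ha0 hax]

lemma kernel_neg {e : ℝ} (he : e < 0) (m : ℕ) : ∀ x a : ℝ, 1 ≤ a → a ≤ x →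
    (∫ u in a..x, kern x e m u) ≤
      (1 / (-e)) * (a ^ e * (1 + (Real.log x - Real.log a)) ^ m) := by
  intro x a ha hax
  have ha0 : (0:ℝ) < a := by linarith
  have hx0 : (0:ℝ) < x := by linarith
  have hbase := one_le_base ha hax
  have step1 : (∫ u in a..x, kern x e m u) ≤
      ∫ u in a..x, (1 + (Real.log x - Real.log a)) ^ m * u ^ (e - 1) := by
    apply integral_mono_on hax (kern_intble x e m ha0 hx0)
    · exact (rpow_intble (e-1) ha0 hx0).const_mul _
    · intro u hu
      obtain ⟨hu1, hu2⟩ := hu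
      have hu0 : (0:ℝ) < u := by linarith
      rw [kern, mul_comm]
      apply mul_le_mul_of_nonneg_right ?_ (Real.rpow_nonneg hu0.le _)
      apply pow_le_pow_left₀ ?_ ?_ m
      · have := log_le_log' hu0 hu2
        linarith
      · have := log_le_log' ha0 hu1
        linarith
  rw [intervalIntegral.integral_const_mul] at step1
  apply step1.trans
  have h2 := integral_rpow_le_neg he ha hax
  calc (1 + (Real.log x - Real.log a)) ^ m * ∫ u in a..x, u ^ (e - 1)
      ≤ (1 + (Real.log x - Real.log a)) ^ m * (a ^ e / (-e)) := by
        apply mul_le_mul_of_nonneg_left h2 (by positivity)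
    _ = (1 / (-e)) * (a ^ e * (1 + (Real.log x - Real.log a)) ^ m) := by ring

lemma kernel_pos {e : ℝ} (he : 0 < e) (m : ℕ) :
    ∃ K, 0 ≤ K ∧ ∀ x a : ℝ, 1 ≤ a → a ≤ x →
      (∫ u in a..x, kern x e m u) ≤ K * x ^ e := by
  set ε := e / (m + 1) with hεdef
  have hε0 : 0 < ε := by positivity
  have hεe : ε * (m + 1) = e := by
    rw [hεdef, div_mul_cancel₀ _ (by positivity)]
  have hεm : e - 1 - ε * m = ε - 1 := by
    have : ε * ((m:ℝ) + 1) = ε * m + ε := by ring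
    linarith [hεe, this]
  refine ⟨(1 + 1/ε) ^ m / ε, by positivity, fun x a ha hax => ?_⟩
  have ha0 : (0:ℝ) < a := by linarith
  have hx0 : (0:ℝ) < x := by linarith
  have hx1 : (1:ℝ) ≤ x := le_trans ha hax
  have step1 : (∫ u in a..x, kern x e m u) ≤
      ∫ u in a..x, ((1 + 1/ε) ^ m * x ^ (ε * m)) * u ^ (ε - 1) := by
    apply integral_mono_on hax (kern_intble x e m ha0 hx0)
    · exact (rpow_intble (ε-1) ha0 hx0).const_mul _
    · intro u hu
      obtain ⟨hu1, hu2⟩ := hu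
      have hu0 : (0:ℝ) < u := by linarith
      have hu1' : (1:ℝ) ≤ u := le_trans ha hu1
      have hxu1 : (1:ℝ) ≤ x / u := (one_le_div hu0).2 hu2
      have hlog : Real.log x - Real.log u = Real.log (x/u) :=
        (Real.log_div hx0.ne' hu0.ne').symm
      have h1 : 1 + (Real.log x - Real.log u) ≤ (1 + 1/ε) * (x/u) ^ ε := by
        have l1 : Real.log (x/u) ≤ (x/u) ^ ε / ε := Real.log_le_rpow_div (by positivity) hε0
        have l2 : (1:ℝ) ≤ (x/u) ^ ε := Real.one_le_rpow hxu1 hε0.le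
        rw [hlog]
        have : (1 + 1/ε) * (x/u) ^ ε = (x/u) ^ ε + ((x/u) ^ ε)/ε := by ring
        rw [this]
        gcongr
      have h2 : (1 + (Real.log x - Real.log u)) ^ m ≤ ((1 + 1/ε) * (x/u) ^ ε) ^ m := by
        apply pow_le_pow_left₀ ?_ h1 m
        have := log_le_log' hu0 hu2
        linarith
      have h3 : ((1 + 1/ε) * (x/u) ^ ε) ^ m = (1 + 1/ε) ^ m * (x ^ (ε * m) * u ^ (-(ε * m))) := by
        rw [mul_pow, ← Real.rpow_natCast ((x/u) ^ ε) m, ← Real.rpow_mul (by positivity),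
          Real.div_rpow hx0.le hu0.le, Real.rpow_neg hu0.le]
        ring
      calc kern x e m u ≤ u ^ (e - 1) * ((1 + 1/ε) ^ m * (x ^ (ε * m) * u ^ (-(ε * m)))) := by
            rw [kern]
            apply mul_le_mul_of_nonneg_left (h3 ▸ h2) (Real.rpow_nonneg hu0.le _)
        _ = ((1 + 1/ε) ^ m * x ^ (ε * m)) * (u ^ (e - 1) * u ^ (-(ε * m))) := by ring
        _ = ((1 + 1/ε) ^ m * x ^ (ε * m)) * u ^ (ε - 1) := by
            rw [← Real.rpow_add hu0, show e - 1 + -(ε * m) = ε - 1 by linarith [hεm]]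
  rw [intervalIntegral.integral_const_mul] at step1
  apply step1.trans
  calc ((1 + 1/ε) ^ m * x ^ (ε * m)) * ∫ u in a..x, u ^ (ε - 1)
      ≤ ((1 + 1/ε) ^ m * x ^ (ε * m)) * (x ^ ε / ε) := by
        apply mul_le_mul_of_nonneg_left (integral_rpow_le_pos hε0 ha hax) (by positivity)
    _ = ((1 + 1/ε) ^ m / ε) * (x ^ (ε * m) * x ^ ε) := by ring
    _ = ((1 + 1/ε) ^ m / ε) * x ^ e := by
        rw [← Real.rpow_add hx0, show ε * m + ε = e by linarith [hεe, show ε * ((m:ℝ)+1) = ε * m + ε by ring]]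

/-! ### slots and the key estimate -/

noncomputable def slot (n j : ℕ) (x a : ℝ) (s : ℕ) : ℝ :=
  a ^ preS β j s * x ^ cutS β n j s * (1 + (Real.log x - Real.log a)) ^ mmS β n j s

lemma slot_nonneg (n j : ℕ) {x a : ℝ} (ha : 1 ≤ a) (hax : a ≤ x) (s : ℕ) :
    0 ≤ slot β n j x a s := by
  have h1 := one_le_base ha hax
  exact mul_nonneg (mul_nonneg (Real.rpow_nonneg (by linarith) _)
    (Real.rpow_nonneg (by linarith) _)) (pow_nonneg (by linarith) _)

lemma key (n j s : ℕ) (hs : s ≤ n) :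
    ∃ K, 0 ≤ K ∧ ∀ x a : ℝ, 1 ≤ a → a ≤ x →
      x ^ cutS β (n+1) j (s+1) *
          ∫ u in a..x, kern x (preS β j (s+1)) (mmS β n (j+1) s) u
        ≤ K * ∑ s' ∈ Finset.range (n+2), slot β (n+1) j x a s' := by
  have hpc : preS β j (s+1) + cutS β (n+1) j (s+1) = cutS β (n+1) j 0 :=
    preS_add_cutS β (n+1) j (s+1) (by omega)
  rcases lt_trichotomy (preS β j (s+1)) 0 with he | he | he
  · -- negative exponent
    refine ⟨1 / (-(preS β j (s+1))), div_nonneg zero_le_one (by linarith), fun x a ha hax => ?_⟩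
    have hx0 : (0:ℝ) < x := by linarith
    have ha0 : (0:ℝ) < a := by linarith
    have h1 := kernel_neg he (mmS β n (j+1) s) x a ha hax
    calc x ^ cutS β (n+1) j (s+1) *
            ∫ u in a..x, kern x (preS β j (s+1)) (mmS β n (j+1) s) u
        ≤ x ^ cutS β (n+1) j (s+1) * ((1 / (-(preS β j (s+1)))) *
            (a ^ preS β j (s+1) * (1 + (Real.log x - Real.log a)) ^ mmS β n (j+1) s)) :=
          mul_le_mul_of_nonneg_left h1 (Real.rpow_nonneg hx0.le _)
      _ = (1 / (-(preS β j (s+1)))) * slot β (n+1) j x a (s+1) := by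
          rw [slot, ← mmS_shift]
          ring
      _ ≤ (1 / (-(preS β j (s+1)))) * ∑ s' ∈ Finset.range (n+2), slot β (n+1) j x a s' := by
          apply mul_le_mul_of_nonneg_left ?_ (div_nonneg zero_le_one (by linarith))
          exact Finset.single_le_sum (f := fun s' => slot β (n+1) j x a s')
            (fun i _ => slot_nonneg β (n+1) j ha hax i)
            (Finset.mem_range.mpr (by omega))
  · -- zero exponent
    refine ⟨1, zero_le_one, fun x a ha hax => ?_⟩
    have hx0 : (0:ℝ) < x := by linarith
    have hcut : cutS β (n+1) j (s+1) = cutS β (n+1) j 0 := by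
      rw [← hpc, he, zero_add]
    have hmm := mmS_zero_le β n j s hs hcut
    have h1 := kernel_zero (mmS β n (j+1) s) x a ha hax
    rw [he]
    calc x ^ cutS β (n+1) j (s+1) *
            ∫ u in a..x, kern x 0 (mmS β n (j+1) s) u
        ≤ x ^ cutS β (n+1) j (s+1) *
            (1 + (Real.log x - Real.log a)) ^ (mmS β n (j+1) s + 1) :=
          mul_le_mul_of_nonneg_left h1 (Real.rpow_nonneg hx0.le _)
      _ ≤ slot β (n+1) j x a 0 := by
          rw [slot, preS_zero, Real.rpow_zero, one_mul, hcut]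
          apply mul_le_mul_of_nonneg_left ?_ (Real.rpow_nonneg hx0.le _)
          exact pow_le_pow_right₀ (one_le_base ha hax) hmm
      _ ≤ 1 * ∑ s' ∈ Finset.range (n+2), slot β (n+1) j x a s' := by
          rw [one_mul]
          exact Finset.single_le_sum (f := fun s' => slot β (n+1) j x a s')
            (fun i _ => slot_nonneg β (n+1) j ha hax i)
            (Finset.mem_range.mpr (by omega))
  · -- positive exponent
    obtain ⟨K, hK0, hK⟩ := kernel_pos he (mmS β n (j+1) s)
    refine ⟨K, hK0, fun x a ha hax => ?_⟩
    have hx0 : (0:ℝ) < x := by linarith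
    calc x ^ cutS β (n+1) j (s+1) *
            ∫ u in a..x, kern x (preS β j (s+1)) (mmS β n (j+1) s) u
        ≤ x ^ cutS β (n+1) j (s+1) * (K * x ^ preS β j (s+1)) :=
          mul_le_mul_of_nonneg_left (hK x a ha hax) (Real.rpow_nonneg hx0.le _)
      _ = K * x ^ cutS β (n+1) j 0 := by
          rw [← hpc, Real.rpow_add hx0]
          ring
      _ ≤ K * slot β (n+1) j x a 0 := by
          apply mul_le_mul_of_nonneg_left ?_ hK0
          rw [slot, preS_zero, Real.rpow_zero, one_mul]
          apply le_mul_of_one_le_right (Real.rpow_nonneg hx0.le _)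
          exact one_le_pow₀ (one_le_base ha hax)
      _ ≤ K * ∑ s' ∈ Finset.range (n+2), slot β (n+1) j x a s' := by
          apply mul_le_mul_of_nonneg_left ?_ hK0
          exact Finset.single_le_sum (f := fun s' => slot β (n+1) j x a s')
            (fun i _ => slot_nonneg β (n+1) j ha hax i)
            (Finset.mem_range.mpr (by omega))

/-! ### continuity and the main induction -/

lemma nest_cont (n : ℕ) : ∀ (j : ℕ) (x : ℝ), 1 ≤ x →
    ContinuousOn (fun a => nestInt β x n j a) (Set.Icc 1 x) := by
  induction n with
  | zero =>
    intro j x hx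
    simp only [nestInt]
    exact continuousOn_const
  | succ n IH =>
    intro j x hx
    have hF : ContinuousOn (fun u => u ^ β j * nestInt β x n (j+1) u) (Set.Icc 1 x) := by
      apply ContinuousOn.mul
      · apply (rpow_contOn (β j)).mono
        intro u hu
        exact lt_of_lt_of_le one_pos hu.1
      · exact IH (j+1) x hx
    have hInt : IntegrableOn (fun u => u ^ β j * nestInt β x n (j+1) u) (Set.uIcc 1 x) := by
      rw [Set.uIcc_of_le hx]
      exact hF.integrableOn_Icc
    have h := intervalIntegral.continuousOn_primitive_interval_left hInt
    rw [Set.uIcc_of_le hx] at h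
    simpa only [nestInt] using h

lemma nest_intble (n j : ℕ) {x a : ℝ} (ha : 1 ≤ a) (hax : a ≤ x) :
    IntervalIntegrable (fun u => u ^ β j * nestInt β x n (j+1) u) volume a x := by
  have hx : (1:ℝ) ≤ x := le_trans ha hax
  have hF : ContinuousOn (fun u => u ^ β j * nestInt β x n (j+1) u) (Set.Icc 1 x) := by
    apply ContinuousOn.mul
    · apply (rpow_contOn (β j)).mono
      intro u hu
      exact lt_of_lt_of_le one_pos hu.1
    · exact nest_cont β n (j+1) x hx
  apply (hF.mono ?_).intervalIntegrable
  rw [Set.uIcc_of_le hax]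
  exact Set.Icc_subset_Icc ha le_rfl

lemma main (n : ℕ) : ∀ j : ℕ, ∃ C, 0 ≤ C ∧ ∀ x a : ℝ, 1 ≤ a → a ≤ x →
    nestInt β x n j a ≤ C * ∑ s ∈ Finset.range (n+1), slot β n j x a s := by
  induction n with
  | zero =>
    intro j
    refine ⟨1, zero_le_one, fun x a ha hax => ?_⟩
    have h3 : slot β 0 j x a 0 = 1 := by
      rw [slot, preS_zero, Real.rpow_zero]
      have h1 : cutS β 0 j 0 = 0 := by simp [cutS]
      have h2 : mmS β 0 j 0 = 0 := by simp [mmS]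
      rw [h1, h2, Real.rpow_zero, pow_zero]
      norm_num
    have h0 : (∑ s ∈ Finset.range (0+1), slot β 0 j x a s) = 1 := by
      norm_num [h3]
    rw [h0, mul_one, nestInt]
  | succ n IH =>
    intro j
    obtain ⟨C, hC0, hC⟩ := IH (j+1)
    have hkey : ∀ s : ℕ, ∃ K, 0 ≤ K ∧ (s ≤ n → ∀ x a : ℝ, 1 ≤ a → a ≤ x →
        x ^ cutS β (n+1) j (s+1) *
            ∫ u in a..x, kern x (preS β j (s+1)) (mmS β n (j+1) s) u
          ≤ K * ∑ s' ∈ Finset.range (n+2), slot β (n+1) j x a s') := by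
      intro s
      by_cases hs : s ≤ n
      · obtain ⟨K, hK0, hK⟩ := key β n j s hs
        exact ⟨K, hK0, fun _ => hK⟩
      · exact ⟨0, le_rfl, fun h => absurd h hs⟩
    choose K hK0 hK using hkey
    refine ⟨C * ∑ s ∈ Finset.range (n+1), K s,
      mul_nonneg hC0 (Finset.sum_nonneg fun i _ => hK0 i), fun x a ha hax => ?_⟩
    have hx1 : (1:ℝ) ≤ x := le_trans ha hax
    have hx0 : (0:ℝ) < x := by linarith
    have ha0 : (0:ℝ) < a := by linarith
    -- pointwise bound on the integrand
    have hGH : ∀ u ∈ Set.Icc a x, u ^ β j * nestInt β x n (j+1) u ≤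
        C * ∑ s ∈ Finset.range (n+1), x ^ cutS β (n+1) j (s+1) *
          kern x (preS β j (s+1)) (mmS β n (j+1) s) u := by
      intro u hu
      have hu1 : (1:ℝ) ≤ u := le_trans ha hu.1
      have hu0 : (0:ℝ) < u := by linarith
      have h1 : nestInt β x n (j+1) u ≤
          C * ∑ s ∈ Finset.range (n+1), slot β n (j+1) x u s := hC x u hu1 hu.2
      calc u ^ β j * nestInt β x n (j+1) u
          ≤ u ^ β j * (C * ∑ s ∈ Finset.range (n+1), slot β n (j+1) x u s) :=
            mul_le_mul_of_nonneg_left h1 (Real.rpow_nonneg hu0.le _)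
        _ = C * ∑ s ∈ Finset.range (n+1), u ^ β j * slot β n (j+1) x u s := by
            rw [Finset.mul_sum, Finset.mul_sum, Finset.mul_sum]
            exact Finset.sum_congr rfl fun s _ => by ring
        _ = C * ∑ s ∈ Finset.range (n+1), x ^ cutS β (n+1) j (s+1) *
              kern x (preS β j (s+1)) (mmS β n (j+1) s) u := by
            congr 1
            apply Finset.sum_congr rfl
            intro s hs
            simp only [slot, kern]
            rw [← cutS_shift]
            rw [show preS β j (s+1) - 1 = β j + preS β (j+1) s by rw [preS_succ]; ring,
              Real.rpow_add hu0]
            ring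
    have hIntG : IntervalIntegrable (fun u => u ^ β j * nestInt β x n (j+1) u) volume a x :=
      nest_intble β n j ha hax
    have hterm : ∀ s ∈ Finset.range (n+1), IntervalIntegrable
        (fun u => x ^ cutS β (n+1) j (s+1) * kern x (preS β j (s+1)) (mmS β n (j+1) s) u)
        volume a x := by
      intro s hs
      exact (kern_intble x _ _ ha0 hx0).const_mul _
    have hIntH : IntervalIntegrable (fun u => C * ∑ s ∈ Finset.range (n+1),
        x ^ cutS β (n+1) j (s+1) * kern x (preS β j (s+1)) (mmS β n (j+1) s) u) volume a x := by
      apply ContinuousOn.intervalIntegrable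
      apply ContinuousOn.mul continuousOn_const
      apply continuousOn_finset_sum
      intro s hs
      apply ContinuousOn.mul continuousOn_const
      apply (kern_contOn x _ _).mono
      intro u hu
      rw [Set.uIcc_of_le hax] at hu
      exact lt_of_lt_of_le ha0 hu.1
    have step1 : nestInt β x (n+1) j a ≤ ∫ u in a..x, C * ∑ s ∈ Finset.range (n+1),
        x ^ cutS β (n+1) j (s+1) * kern x (preS β j (s+1)) (mmS β n (j+1) s) u := by
      have heq : nestInt β x (n+1) j a = ∫ u in a..x, u ^ β j * nestInt β x n (j+1) u := by
        rw [nestInt]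
      rw [heq]
      exact intervalIntegral.integral_mono_on hax hIntG hIntH hGH
    rw [intervalIntegral.integral_const_mul,
      intervalIntegral.integral_finset_sum hterm] at step1
    have hpull : ∀ s, (∫ u in a..x, x ^ cutS β (n+1) j (s+1) *
        kern x (preS β j (s+1)) (mmS β n (j+1) s) u) =
        x ^ cutS β (n+1) j (s+1) *
          ∫ u in a..x, kern x (preS β j (s+1)) (mmS β n (j+1) s) u := by
      intro s
      exact intervalIntegral.integral_const_mul _ _
    simp only [hpull] at step1
    calc nestInt β x (n+1) j a
        ≤ C * ∑ s ∈ Finset.range (n+1), x ^ cutS β (n+1) j (s+1) *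
            ∫ u in a..x, kern x (preS β j (s+1)) (mmS β n (j+1) s) u := step1
      _ ≤ C * ∑ s ∈ Finset.range (n+1),
            K s * ∑ s' ∈ Finset.range (n+2), slot β (n+1) j x a s' := by
          apply mul_le_mul_of_nonneg_left ?_ hC0
          apply Finset.sum_le_sum
          intro s hs
          exact hK s (Nat.lt_succ_iff.mp (Finset.mem_range.mp hs)) x a ha hax
      _ = (C * ∑ s ∈ Finset.range (n+1), K s) *
            ∑ s' ∈ Finset.range (n+2), slot β (n+1) j x a s' := by
          rw [← Finset.sum_mul, mul_assoc]
      _ = (C * ∑ s ∈ Finset.range (n+1), K s) *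
            ∑ s' ∈ Finset.range (n+1+1), slot β (n+1) j x a s' := by norm_num

/-! ### absorbing lower-order terms -/

lemma absorb {c M : ℝ} (hcM : c ≤ M) (m M' : ℕ) (hm : c = M → m ≤ M') :
    ∃ K, 0 ≤ K ∧ ∀ t : ℝ, 2 ≤ t →
      t ^ c * (1 + Real.log t) ^ m ≤ K * (t ^ M * Real.log t ^ M') := by
  have hl2 : 0 < Real.log 2 := Real.log_pos (by norm_num)
  rcases eq_or_lt_of_le hcM with rfl | hlt
  · -- c = M
    have hmM := hm rfl
    refine ⟨(1 + 1/Real.log 2) ^ M', by positivity, fun t ht => ?_⟩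
    have ht0 : (0:ℝ) < t := by linarith
    have hlt2 : Real.log 2 ≤ Real.log t := log_le_log' (by norm_num) ht
    have h1 : (1:ℝ) ≤ 1 + Real.log t := by linarith
    calc t ^ c * (1 + Real.log t) ^ m
        ≤ t ^ c * (1 + Real.log t) ^ M' :=
          mul_le_mul_of_nonneg_left (pow_le_pow_right₀ h1 hmM) (Real.rpow_nonneg ht0.le _)
      _ ≤ t ^ c * ((1 + 1/Real.log 2) * Real.log t) ^ M' := by
          apply mul_le_mul_of_nonneg_left ?_ (Real.rpow_nonneg ht0.le _)
          apply pow_le_pow_left₀ (by linarith) ?_ M'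
          have hd : 1 ≤ Real.log t / Real.log 2 := (one_le_div hl2).2 hlt2
          have h2 : (1 + 1/Real.log 2) * Real.log t
              = Real.log t + Real.log t / Real.log 2 := by ring
          rw [h2]
          linarith
      _ = (1 + 1/Real.log 2) ^ M' * (t ^ c * Real.log t ^ M') := by
          rw [mul_pow]; ring
  · -- c < M
    set δ := (M - c)/(m+1) with hδdef
    have hδ0 : 0 < δ := div_pos (by linarith) (by positivity)
    refine ⟨(1 + 1/δ) ^ m / Real.log 2 ^ M', by positivity, fun t ht => ?_⟩
    have ht0 : (0:ℝ) < t := by linarith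
    have ht1 : (1:ℝ) ≤ t := by linarith
    have hlt2 : Real.log 2 ≤ Real.log t := log_le_log' (by norm_num) ht
    have hlogt0 : 0 ≤ Real.log t := by linarith
    have h1 : 1 + Real.log t ≤ (1 + 1/δ) * t ^ δ := by
      have l1 : Real.log t ≤ t ^ δ / δ := Real.log_le_rpow_div ht0.le hδ0
      have l2 : (1:ℝ) ≤ t ^ δ := Real.one_le_rpow ht1 hδ0.le
      have h2 : (1 + 1/δ) * t ^ δ = t ^ δ + t ^ δ / δ := by ring
      rw [h2]
      linarith
    have h2 : (1 + Real.log t) ^ m ≤ (1 + 1/δ) ^ m * t ^ (δ * m) := by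
      calc (1 + Real.log t) ^ m ≤ ((1 + 1/δ) * t ^ δ) ^ m :=
            pow_le_pow_left₀ (by linarith) h1 m
        _ = (1 + 1/δ) ^ m * (t ^ δ) ^ m := mul_pow _ _ m
        _ = (1 + 1/δ) ^ m * t ^ (δ * m) := by
            rw [← Real.rpow_natCast (t ^ δ) m, ← Real.rpow_mul ht0.le]
    have h4 : c + δ * m ≤ M := by
      have hδ1 : δ * ((m:ℝ) + 1) = M - c := by
        rw [hδdef]
        field_simp
      nlinarith [hδ0]
    have h5 : t ^ (c + δ * m) ≤ t ^ M := Real.rpow_le_rpow_of_exponent_le ht1 h4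
    have h6 : (1:ℝ) ≤ (Real.log t / Real.log 2) ^ M' := one_le_pow₀ ((one_le_div hl2).2 hlt2)
    calc t ^ c * (1 + Real.log t) ^ m
        ≤ t ^ c * ((1 + 1/δ) ^ m * t ^ (δ * m)) :=
          mul_le_mul_of_nonneg_left h2 (Real.rpow_nonneg ht0.le _)
      _ = (1 + 1/δ) ^ m * (t ^ c * t ^ (δ * m)) := by ring
      _ = (1 + 1/δ) ^ m * t ^ (c + δ * m) := by rw [← Real.rpow_add ht0]
      _ ≤ (1 + 1/δ) ^ m * t ^ M :=
          mul_le_mul_of_nonneg_left h5 (by positivity)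
      _ ≤ (1 + 1/δ) ^ m * t ^ M * (Real.log t / Real.log 2) ^ M' := by
          apply le_mul_of_one_le_right ?_ h6
          positivity
      _ = ((1 + 1/δ) ^ m / Real.log 2 ^ M') * (t ^ M * Real.log t ^ M') := by
          rw [div_pow]; ring

end NestAux

theorem nested_integral_upper_bound (k : ℕ) (hk : 1 ≤ k) (β : ℕ → ℝ) :
    ∃ C₂ : ℝ, ∀ t : ℝ, 2 ≤ t →
      nestInt β t k 1 1 ≤ C₂ * t ^ ((k : ℝ) + maxB k β) * (Real.log t) ^ (numMax k β - 1) := by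
  classical
  obtain ⟨C, hC0, hC⟩ := NestAux.main β k 1
  have hcut : ∀ s : ℕ, s ≤ k → NestAux.cutS β k 1 s = (k:ℝ) + maxF k β s := by
    intro s hs
    have hIco : Finset.Ico (1+s) (1+k) = Finset.Icc (s+1) k := by
      rw [show 1+s = s+1 by omega, show 1+k = k+1 by omega, Finset.Ico_add_one_right_eq_Icc]
    rw [NestAux.cutS, maxF, hIco, Finset.sum_add_distrib, Finset.sum_const, nsmul_eq_mul,
      mul_one, Nat.card_Icc]
    have hcast : ((k + 1 - (s+1) : ℕ) : ℝ) = (k:ℝ) - s := by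
      rw [show k + 1 - (s+1) = k - s by omega, Nat.cast_sub hs]
    rw [hcast]
    ring
  have hmm : ∀ s : ℕ, s ≤ k → NestAux.cutS β k 1 s = (k:ℝ) + maxB k β →
      NestAux.mmS β k 1 s ≤ numMax k β - 1 := by
    intro s hs hseq
    have hsmax : maxF k β s = maxB k β := by
      have h1 := hcut s hs
      rw [h1] at hseq
      linarith
    have hsub : (Finset.Ioc s k).filter
          (fun s' => NestAux.cutS β k 1 s' = NestAux.cutS β k 1 s) ⊆
        ((Finset.range (k+1)).filter fun s' => maxF k β s' = maxB k β).erase s := by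
      intro a hamem
      simp only [Finset.mem_filter, Finset.mem_Ioc] at hamem
      obtain ⟨⟨ha1, ha2⟩, ha3⟩ := hamem
      apply Finset.mem_erase.2
      refine ⟨by omega, Finset.mem_filter.2 ⟨Finset.mem_range.2 (by omega), ?_⟩⟩
      have h1 := hcut a ha2
      have h2 := hcut s hs
      rw [h1, h2] at ha3
      have : maxF k β a = maxF k β s := by linarith
      rw [this, hsmax]
    have hcard := Finset.card_le_card hsub
    rw [Finset.card_erase_of_mem
      (Finset.mem_filter.2 ⟨Finset.mem_range.2 (by omega), hsmax⟩)] at hcard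
    unfold NestAux.mmS numMax
    exact hcard
  have habs : ∀ s : ℕ, ∃ Ks, 0 ≤ Ks ∧ (s ≤ k → ∀ t : ℝ, 2 ≤ t →
      t ^ NestAux.cutS β k 1 s * (1 + Real.log t) ^ NestAux.mmS β k 1 s ≤
        Ks * (t ^ ((k:ℝ) + maxB k β) * Real.log t ^ (numMax k β - 1))) := by
    intro s
    by_cases hs : s ≤ k
    · have h1 : NestAux.cutS β k 1 s ≤ (k:ℝ) + maxB k β := by
        rw [hcut s hs]
        have := Finset.le_sup' (maxF k β) (Finset.mem_range.2 (show s < k + 1 by omega))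
        have h2 : maxF k β s ≤ maxB k β := this
        linarith
      obtain ⟨Ks, hKs0, hKs⟩ :=
        NestAux.absorb h1 (NestAux.mmS β k 1 s) (numMax k β - 1) (hmm s hs)
      exact ⟨Ks, hKs0, fun _ => hKs⟩
    · exact ⟨0, le_rfl, fun h => absurd h hs⟩
  choose Ks hKs0 hKs using habs
  refine ⟨C * ∑ s ∈ Finset.range (k+1), Ks s, fun t ht => ?_⟩
  have ht1 : (1:ℝ) ≤ t := by linarith
  have h2 := hC t 1 le_rfl ht1
  have hslot : ∀ s, NestAux.slot β k 1 t 1 s =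
      t ^ NestAux.cutS β k 1 s * (1 + Real.log t) ^ NestAux.mmS β k 1 s := by
    intro s
    rw [NestAux.slot, Real.one_rpow, Real.log_one, sub_zero, one_mul]
  calc nestInt β t k 1 1 ≤ C * ∑ s ∈ Finset.range (k+1), NestAux.slot β k 1 t 1 s := h2
    _ ≤ C * ∑ s ∈ Finset.range (k+1),
          Ks s * (t ^ ((k:ℝ) + maxB k β) * Real.log t ^ (numMax k β - 1)) := by
        apply mul_le_mul_of_nonneg_left ?_ hC0
        apply Finset.sum_le_sum
        intro s hs
        rw [hslot s]
        exact hKs s (Nat.lt_succ_iff.mp (Finset.mem_range.mp hs)) t ht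
    _ = (C * ∑ s ∈ Finset.range (k+1), Ks s) * t ^ ((k:ℝ) + maxB k β) *
          Real.log t ^ (numMax k β - 1) := by
        rw [← Finset.sum_mul]
        ring
end

section
/- Let k ≥ 1 be an integer and β(1),…,β(k) real numbers, with f, B and r as defined. Define for t ≥ 2 the iterated integral I(t) = ∫₁^t u₁^{β(1)} ( ∫_{u₁}^t u₂^{β(2)} ( ⋯ ( ∫_{u_{k−1}}^t u_k^{β(k)} du_k ) ⋯ ) du₂ ) du₁. Then there exist a constant C₁ > 0 and t₀ ≥ 2 such that I(t) ≥ C₁ · t^{k+B} (log t)^{r−1} for all t ≥ t₀. -/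
open Finset Real MeasureTheory intervalIntegral

namespace NestedAux

lemma nest_zero (β : ℕ → ℝ) (t : ℝ) (j : ℕ) (a : ℝ) : nestInt β t 0 j a = 1 := rfl

lemma nest_succ (β : ℕ → ℝ) (t : ℝ) (n j : ℕ) (a : ℝ) :
    nestInt β t (n + 1) j a = ∫ u in a..t, u ^ β j * nestInt β t n (j + 1) u := rfl

lemma min_pow_pos (p : ℝ) : 0 < min 1 ((2:ℝ) ^ p) :=
  lt_min one_pos (Real.rpow_pos_of_pos two_pos p)

/-- lower bound for `u ^ p` on a dyadic interval. -/
lemma rpow_dyadic_lower {L u p : ℝ} (hL : 0 < L) (h1 : L ≤ u) (h2 : u ≤ 2 * L) :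
    L ^ p * min 1 ((2:ℝ) ^ p) ≤ u ^ p := by
  rcases le_total 0 p with hp | hp
  · calc L ^ p * min 1 ((2:ℝ) ^ p) ≤ L ^ p * 1 :=
        mul_le_mul_of_nonneg_left (min_le_left _ _) (Real.rpow_nonneg hL.le _)
    _ = L ^ p := mul_one _
    _ ≤ u ^ p := Real.rpow_le_rpow hL.le h1 hp
  · have hu : 0 < u := hL.trans_le h1
    calc L ^ p * min 1 ((2:ℝ) ^ p) ≤ L ^ p * 2 ^ p :=
        mul_le_mul_of_nonneg_left (min_le_right _ _) (Real.rpow_nonneg hL.le _)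
    _ = (2 * L) ^ p := by
        rw [Real.mul_rpow (by norm_num) hL.le]; ring
    _ ≤ u ^ p := Real.rpow_le_rpow_of_nonpos hu h2 hp

lemma nest_contOn (β : ℕ → ℝ) {t : ℝ} (ht : 1 ≤ t) :
    ∀ n j, ContinuousOn (nestInt β t n j) (Set.Icc 1 t) := by
  intro n
  induction n with
  | zero =>
    intro j
    have h : nestInt β t 0 j = fun _ => (1:ℝ) := rfl
    rw [h]; exact continuousOn_const
  | succ n ih =>
    intro j
    have hint : ContinuousOn (fun u : ℝ => u ^ β j * nestInt β t n (j + 1) u)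
        (Set.Icc 1 t) := by
      refine ContinuousOn.mul (fun x hx => ?_) (ih (j + 1))
      exact (Real.continuousAt_rpow_const x (β j)
        (Or.inl (zero_lt_one.trans_le hx.1).ne')).continuousWithinAt
    have heq : nestInt β t (n + 1) j =
        fun a => ∫ u in a..t, u ^ β j * nestInt β t n (j + 1) u := rfl
    rw [heq]
    have h2 := intervalIntegral.continuousOn_primitive_interval_left
      (f := fun u : ℝ => u ^ β j * nestInt β t n (j + 1) u) (μ := volume) (a := 1) (b := t)
      (by rw [Set.uIcc_of_le ht]; exact hint.integrableOn_Icc)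
    rwa [Set.uIcc_of_le ht] at h2

lemma integrand_contOn (β : ℕ → ℝ) {t : ℝ} (ht : 1 ≤ t) (n j : ℕ) :
    ContinuousOn (fun u : ℝ => u ^ β j * nestInt β t n (j + 1) u) (Set.Icc 1 t) := by
  refine ContinuousOn.mul (fun x hx => ?_) (nest_contOn β ht n (j + 1))
  exact (Real.continuousAt_rpow_const x (β j)
    (Or.inl (zero_lt_one.trans_le hx.1).ne')).continuousWithinAt

lemma nest_intble (β : ℕ → ℝ) {t c d : ℝ} (n j : ℕ) (hc : 1 ≤ c) (hcd : c ≤ d) (hdt : d ≤ t) :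
    IntervalIntegrable (fun u : ℝ => u ^ β j * nestInt β t n (j + 1) u) volume c d := by
  have ht : 1 ≤ t := le_trans (hc.trans hcd) hdt
  have h := (integrand_contOn β ht n j).mono
    (Set.Icc_subset_Icc hc hdt : Set.Icc c d ⊆ Set.Icc 1 t)
  rw [← Set.uIcc_of_le hcd] at h
  exact h.intervalIntegrable

lemma nest_nonneg (β : ℕ → ℝ) (t : ℝ) :
    ∀ n j a, 1 ≤ a → a ≤ t → 0 ≤ nestInt β t n j a := by
  intro n
  induction n with
  | zero => intro j a _ _; rw [nest_zero]; norm_num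
  | succ n ih =>
    intro j a ha hat
    rw [nest_succ]
    apply intervalIntegral.integral_nonneg hat
    intro u hu
    exact mul_nonneg (Real.rpow_nonneg (le_trans zero_le_one (le_trans ha hu.1)) _)
      (ih (j + 1) u (le_trans ha hu.1) hu.2)

lemma nest_restrict (β : ℕ → ℝ) {t a c d : ℝ} (n j : ℕ)
    (ha : 1 ≤ a) (hac : a ≤ c) (hcd : c ≤ d) (hdt : d ≤ t) :
    (∫ u in c..d, u ^ β j * nestInt β t n (j + 1) u) ≤ nestInt β t (n + 1) j a := by
  have hct : c ≤ t := hcd.trans hdt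
  have hc1 : 1 ≤ c := ha.trans hac
  have hd1 : 1 ≤ d := hc1.trans hcd
  have I1 : IntervalIntegrable (fun u : ℝ => u ^ β j * nestInt β t n (j + 1) u) volume a c :=
    nest_intble β n j ha hac hct
  have I2 : IntervalIntegrable (fun u : ℝ => u ^ β j * nestInt β t n (j + 1) u) volume c d :=
    nest_intble β n j hc1 hcd hdt
  have I3 : IntervalIntegrable (fun u : ℝ => u ^ β j * nestInt β t n (j + 1) u) volume d t :=
    nest_intble β n j hd1 hdt le_rfl
  have hsplit2 : (∫ u in c..d, u ^ β j * nestInt β t n (j + 1) u)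
      + (∫ u in d..t, u ^ β j * nestInt β t n (j + 1) u)
      = ∫ u in c..t, u ^ β j * nestInt β t n (j + 1) u :=
    intervalIntegral.integral_add_adjacent_intervals I2 I3
  have hsplit1 : (∫ u in a..c, u ^ β j * nestInt β t n (j + 1) u)
      + (∫ u in c..t, u ^ β j * nestInt β t n (j + 1) u)
      = ∫ u in a..t, u ^ β j * nestInt β t n (j + 1) u :=
    intervalIntegral.integral_add_adjacent_intervals I1 (I2.trans I3)
  have hnn : ∀ x y : ℝ, 1 ≤ x → x ≤ y → y ≤ t →
      0 ≤ ∫ u in x..y, u ^ β j * nestInt β t n (j + 1) u := by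
    intro x y hx hxy hyt
    apply intervalIntegral.integral_nonneg hxy
    intro u hu
    exact mul_nonneg (Real.rpow_nonneg (le_trans zero_le_one (le_trans hx hu.1)) _)
      (nest_nonneg β t n (j + 1) u (le_trans hx hu.1) (hu.2.trans hyt))
  have h1 := hnn a c ha hac hct
  have h3 := hnn d t hd1 (hdt) le_rfl
  rw [nest_succ]
  linarith [hsplit1, hsplit2]

/-- crude lower bound: for `2^m a ≤ t`, `nestInt β t m j a ≳ a^(m + ∑β)`. -/
lemma nest_crude (β : ℕ → ℝ) : ∀ m j : ℕ, ∃ c : ℝ, 0 < c ∧ ∀ a t : ℝ, 1 ≤ a → 2 ^ m * a ≤ t →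
    c * a ^ ((m : ℝ) + ∑ i ∈ Finset.Ico j (j + m), β i) ≤ nestInt β t m j a := by
  intro m
  induction m with
  | zero =>
    intro j
    refine ⟨1, one_pos, fun a t ha hat => ?_⟩
    rw [nest_zero]
    simp [Real.rpow_zero]
  | succ m ih =>
    intro j
    obtain ⟨c, hc, H⟩ := ih (j + 1)
    set q : ℝ := (m : ℝ) + ∑ i ∈ Finset.Ico (j + 1) (j + 1 + m), β i with hq
    set p : ℝ := β j + q with hp
    refine ⟨c * min 1 ((2:ℝ) ^ p), mul_pos hc (min_pow_pos p), fun a t ha hat => ?_⟩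
    have ha0 : (0:ℝ) < a := zero_lt_one.trans_le ha
    have h2pow : (2:ℝ) ≤ 2 ^ (m + 1) := by
      calc (2:ℝ) = 2 ^ 1 := (pow_one 2).symm
      _ ≤ 2 ^ (m + 1) := pow_le_pow_right₀ one_le_two (by omega)
    have h2a : 2 * a ≤ t := by nlinarith
    have ht1 : (1:ℝ) ≤ t := le_trans (by linarith) h2a
    have hpt : ∀ u ∈ Set.Icc a (2 * a),
        c * min 1 ((2:ℝ) ^ p) * a ^ p ≤ u ^ β j * nestInt β t m (j + 1) u := by
      intro u hu
      have hu1 : 1 ≤ u := le_trans ha hu.1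
      have hu0 : (0:ℝ) < u := zero_lt_one.trans_le hu1
      have hps : (2:ℝ) ^ (m + 1) = 2 ^ m * 2 := pow_succ 2 m
      have h2m : (0:ℝ) < 2 ^ m := pow_pos two_pos m
      have hcr : c * u ^ q ≤ nestInt β t m (j + 1) u := by
        apply H u t hu1
        nlinarith [hu.2]
      have h1 : a ^ p * min 1 ((2:ℝ) ^ p) ≤ u ^ p := rpow_dyadic_lower ha0 hu.1 hu.2
      calc c * min 1 ((2:ℝ) ^ p) * a ^ p = c * (a ^ p * min 1 ((2:ℝ) ^ p)) := by ring
      _ ≤ c * u ^ p := mul_le_mul_of_nonneg_left h1 hc.le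
      _ = u ^ β j * (c * u ^ q) := by rw [hp, Real.rpow_add hu0]; ring
      _ ≤ u ^ β j * nestInt β t m (j + 1) u :=
          mul_le_mul_of_nonneg_left hcr (Real.rpow_nonneg hu0.le _)
    have hmono := intervalIntegral.integral_mono_on (μ := volume) (a := a) (b := 2 * a)
      (by linarith) (intervalIntegrable_const) (nest_intble β m j ha (by linarith) h2a) hpt
    have hconst : (∫ _ in a..(2 * a), c * min 1 ((2:ℝ) ^ p) * a ^ p)
        = a * (c * min 1 ((2:ℝ) ^ p) * a ^ p) := by
      rw [intervalIntegral.integral_const, smul_eq_mul]; ring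
    have hrestr := nest_restrict β m j ha le_rfl (by linarith : a ≤ 2 * a) h2a
    have hsum : ∑ i ∈ Finset.Ico j (j + (m + 1)), β i
        = β j + ∑ i ∈ Finset.Ico (j + 1) (j + 1 + m), β i := by
      rw [Finset.sum_eq_sum_Ico_succ_bot (by omega : j < j + (m + 1)),
        show j + (m + 1) = j + 1 + m from by omega]
    have hexp : ((m + 1 : ℕ) : ℝ) + ∑ i ∈ Finset.Ico j (j + (m + 1)), β i = p + 1 := by
      rw [hsum, hp, hq]; push_cast; ring
    calc c * min 1 ((2:ℝ) ^ p) * a ^ (((m + 1 : ℕ) : ℝ) + ∑ i ∈ Finset.Ico j (j + (m + 1)), β i)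
        = c * min 1 ((2:ℝ) ^ p) * a ^ (p + 1) := by rw [hexp]
    _ = a * (c * min 1 ((2:ℝ) ^ p) * a ^ p) := by
        rw [Real.rpow_add_one ha0.ne']; ring
    _ = ∫ _ in a..(2 * a), c * min 1 ((2:ℝ) ^ p) * a ^ p := hconst.symm
    _ ≤ ∫ u in a..(2 * a), u ^ β j * nestInt β t m (j + 1) u := hmono
    _ ≤ nestInt β t (m + 1) j a := hrestr

/-! ### combinatorics of the maximizers -/

noncomputable def tB (k : ℕ) (β : ℕ → ℝ) (s₀ : ℕ) : ℝ :=
  (insert k (Finset.Icc s₀ k)).sup' (Finset.insert_nonempty _ _) (maxF k β)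

noncomputable def tR (k : ℕ) (β : ℕ → ℝ) (s₀ : ℕ) : ℕ :=
  ((insert k (Finset.Icc s₀ k)).filter fun s => maxF k β s = tB k β s₀).card

lemma le_tB (k : ℕ) (β : ℕ → ℝ) {s₀ s : ℕ} (h1 : s₀ ≤ s) (h2 : s ≤ k) :
    maxF k β s ≤ tB k β s₀ :=
  Finset.le_sup' _ (by simp only [Finset.mem_insert, Finset.mem_Icc]; omega)

lemma tB_le (k : ℕ) (β : ℕ → ℝ) {s₀ : ℕ} {x : ℝ}
    (h : ∀ s, s₀ ≤ s → s ≤ k → maxF k β s ≤ x) (hk : maxF k β k ≤ x) : tB k β s₀ ≤ x := by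
  apply Finset.sup'_le
  intro s hs
  simp only [Finset.mem_insert, Finset.mem_Icc] at hs
  rcases hs with rfl | ⟨h1, h2⟩
  · exact hk
  · exact h s h1 h2

lemma tR_pos (k : ℕ) (β : ℕ → ℝ) (s₀ : ℕ) : 1 ≤ tR k β s₀ := by
  obtain ⟨i, hi, hEq⟩ := Finset.exists_mem_eq_sup'
    (Finset.insert_nonempty k (Finset.Icc s₀ k)) (maxF k β)
  exact Finset.card_pos.2 ⟨i, Finset.mem_filter.2 ⟨hi, hEq.symm⟩⟩

lemma tB_zero (k : ℕ) (β : ℕ → ℝ) : tB k β 0 = maxB k β := by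
  apply le_antisymm
  · apply Finset.sup'_le
    intro s hs
    simp only [Finset.mem_insert, Finset.mem_Icc] at hs
    apply Finset.le_sup'
    simp only [Finset.mem_range]
    omega
  · apply Finset.sup'_le
    intro s hs
    simp only [Finset.mem_range] at hs
    apply Finset.le_sup'
    simp only [Finset.mem_insert, Finset.mem_Icc]
    omega

lemma set_zero (k : ℕ) : insert k (Finset.Icc 0 k) = Finset.range (k + 1) := by
  ext x
  simp only [Finset.mem_insert, Finset.mem_Icc, Finset.mem_range]
  omega

lemma tR_zero (k : ℕ) (β : ℕ → ℝ) : tR k β 0 = numMax k β := by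
  unfold tR numMax
  rw [tB_zero, set_zero]

lemma tB_self (k : ℕ) (β : ℕ → ℝ) : tB k β k = maxF k β k := by
  apply le_antisymm
  · apply Finset.sup'_le
    intro s hs
    simp only [Finset.mem_insert, Finset.mem_Icc] at hs
    have : s = k := by omega
    rw [this]
  · exact le_tB k β le_rfl le_rfl

lemma tR_self (k : ℕ) (β : ℕ → ℝ) : tR k β k = 1 := by
  unfold tR
  have hset : insert k (Finset.Icc k k) = {k} := by
    ext x
    simp only [Finset.mem_insert, Finset.mem_Icc, Finset.mem_singleton]
    omega
  rw [hset, Finset.filter_singleton, if_pos (tB_self k β).symm, Finset.card_singleton]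

lemma maxF_self (k : ℕ) (β : ℕ → ℝ) : maxF k β k = -(k : ℝ) := by
  unfold maxF
  rw [Finset.Icc_eq_empty (by omega), Finset.sum_empty, add_zero]

lemma set_rec (k : ℕ) {s₀ : ℕ} (h : s₀ < k) :
    insert k (Finset.Icc s₀ k) = insert s₀ (insert k (Finset.Icc (s₀ + 1) k)) := by
  ext x
  simp only [Finset.mem_insert, Finset.mem_Icc]
  omega

lemma s0_not_mem (k : ℕ) {s₀ : ℕ} (h : s₀ < k) :
    s₀ ∉ insert k (Finset.Icc (s₀ + 1) k) := by
  simp only [Finset.mem_insert, Finset.mem_Icc]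
  omega

-- case (a): strict new maximum
lemma tB_rec_gt (k : ℕ) (β : ℕ → ℝ) {s₀ : ℕ} (h : s₀ < k)
    (hgt : tB k β (s₀ + 1) < maxF k β s₀) : tB k β s₀ = maxF k β s₀ := by
  apply le_antisymm
  · apply tB_le
    · intro s h1 h2
      rcases eq_or_lt_of_le h1 with rfl | h1'
      · exact le_rfl
      · exact le_trans (le_tB k β h1' h2) hgt.le
    · exact le_trans (le_tB k β (by omega) le_rfl) hgt.le
  · exact le_tB k β le_rfl h.le

lemma tR_rec_gt (k : ℕ) (β : ℕ → ℝ) {s₀ : ℕ} (h : s₀ < k)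
    (hgt : tB k β (s₀ + 1) < maxF k β s₀) : tR k β s₀ = 1 := by
  unfold tR
  rw [tB_rec_gt k β h hgt, set_rec k h, Finset.filter_insert, if_pos rfl]
  have hempty : Finset.filter (fun s => maxF k β s = maxF k β s₀)
      (insert k (Finset.Icc (s₀ + 1) k)) = ∅ := by
    apply Finset.filter_eq_empty_iff.2
    intro s hs
    simp only [Finset.mem_insert, Finset.mem_Icc] at hs
    have hle : maxF k β s ≤ tB k β (s₀ + 1) := by
      rcases hs with h | ⟨h1, h2⟩
      · rw [h]; exact le_tB k β (by omega) le_rfl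
      · exact le_tB k β h1 h2
    intro hEq
    rw [hEq] at hle
    linarith
  rw [hempty]
  simp

-- case (b): old maximum persists
lemma tB_rec_le (k : ℕ) (β : ℕ → ℝ) {s₀ : ℕ} (h : s₀ < k)
    (hle : maxF k β s₀ ≤ tB k β (s₀ + 1)) : tB k β s₀ = tB k β (s₀ + 1) := by
  apply le_antisymm
  · apply tB_le
    · intro s h1 h2
      rcases eq_or_lt_of_le h1 with rfl | h1'
      · exact hle
      · exact le_tB k β h1' h2
    · exact le_tB k β (by omega) le_rfl
  · apply tB_le
    · intro s h1 h2
      exact le_tB k β (by omega) h2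
    · exact le_tB k β (by omega) le_rfl

lemma tR_rec_lt (k : ℕ) (β : ℕ → ℝ) {s₀ : ℕ} (h : s₀ < k)
    (hlt : maxF k β s₀ < tB k β (s₀ + 1)) : tR k β s₀ = tR k β (s₀ + 1) := by
  unfold tR
  rw [tB_rec_le k β h hlt.le, set_rec k h, Finset.filter_insert, if_neg (ne_of_lt hlt)]

lemma tR_rec_eq (k : ℕ) (β : ℕ → ℝ) {s₀ : ℕ} (h : s₀ < k)
    (heq : maxF k β s₀ = tB k β (s₀ + 1)) : tR k β s₀ = tR k β (s₀ + 1) + 1 := by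
  unfold tR
  rw [tB_rec_le k β h heq.le, set_rec k h, Finset.filter_insert, if_pos heq,
    Finset.card_insert_of_notMem]
  intro hmem
  exact s0_not_mem k h (Finset.filter_subset _ _ hmem)

lemma maxF_split (k : ℕ) (β : ℕ → ℝ) {s₀ : ℕ} (h : s₀ < k) :
    maxF k β s₀ = 1 + β (s₀ + 1) + maxF k β (s₀ + 1) := by
  unfold maxF
  rw [← Finset.Ico_add_one_right_eq_Icc, ← Finset.Ico_add_one_right_eq_Icc,
    Finset.sum_eq_sum_Ico_succ_bot (by omega : s₀ + 1 < k + 1)]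
  push_cast
  ring


set_option maxHeartbeats 2000000 in
/-- Main downward induction: lower bound for the tail integral with `m` levels,
starting at index `k - m + 1`, uniformly for `1 ≤ a ≤ t^θ`. -/
lemma main (k : ℕ) (β : ℕ → ℝ) : ∀ m : ℕ, m ≤ k →
    ∃ c t₁ : ℝ, 0 < c ∧ 2 ≤ t₁ ∧ ∀ t : ℝ, t₁ ≤ t → ∀ a : ℝ, 1 ≤ a →
      a ≤ t ^ ((((k - m : ℕ) : ℝ) + 1) / (2 * ((k : ℝ) + 1))) →
      c * a ^ (maxF k β (k - m) - tB k β (k - m)) * t ^ ((k : ℝ) + tB k β (k - m)) *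
        Real.log t ^ (tR k β (k - m) - 1) ≤ nestInt β t m (k - m + 1) a := by
  intro m
  induction m with
  | zero =>
    intro _
    refine ⟨1, 2, one_pos, le_rfl, fun t ht a ha _ => ?_⟩
    rw [Nat.sub_zero, nest_zero, tB_self, tR_self, maxF_self]
    norm_num
  | succ m ih =>
    intro hmk
    obtain ⟨c₂, t₂, hc₂, ht₂2, H₂⟩ := ih (by omega)
    set s₀ := k - (m + 1) with hs₀def
    have hs₀k : s₀ < k := by omega
    have hkm : k - m = s₀ + 1 := by omega
    rw [hkm] at H₂
    have hsplit := maxF_split k β hs₀k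
    set θ : ℝ := ((s₀ : ℝ) + 1) / (2 * ((k : ℝ) + 1)) with hθdef
    set Δ : ℝ := 1 / (2 * ((k : ℝ) + 1)) with hΔdef
    have hΔ0 : 0 < Δ := by rw [hΔdef]; positivity
    have hθ0 : 0 < θ := by rw [hθdef]; positivity
    have hsleqk : (s₀ : ℝ) ≤ (k : ℝ) := Nat.cast_le.2 hs₀k.le
    have hθhalf : θ ≤ 1 / 2 := by
      rw [hθdef, div_le_div_iff₀ (by positivity) (by norm_num)]
      linarith
    have hθΔ1 : θ + Δ ≤ 1 := by
      rw [hθdef, hΔdef, ← add_div, div_le_one (by positivity)]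
      linarith
    have hθΔ : (((s₀ + 1 : ℕ) : ℝ) + 1) / (2 * ((k : ℝ) + 1)) = θ + Δ := by
      rw [hθdef, hΔdef, ← add_div]
      push_cast
      ring
    rw [hθΔ] at H₂
    rcases lt_trichotomy (tB k β (s₀ + 1)) (maxF k β s₀) with hgt | heqB | hlt
    · -- case (a): strictly new maximum; use the crude bound near u ≈ t
      obtain ⟨c₃, hc₃, H₃⟩ := nest_crude β m (s₀ + 1 + 1)
      set p : ℝ := β (s₀ + 1) + ((m : ℝ) + ∑ i ∈ Finset.Ico (s₀ + 1 + 1) (s₀ + 1 + 1 + m), β i)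
        with hpdef
      have hEp : p + 1 = (k : ℝ) + maxF k β s₀ := by
        have hk' : ((k : ℕ) : ℝ) = (s₀ : ℝ) + 1 + (m : ℝ) := by
          have h : k = s₀ + 1 + m := by omega
          rw [h]; push_cast; ring
        have hIco : Finset.Ico (s₀ + 1 + 1) (s₀ + 1 + 1 + m)
            = Finset.Ico (s₀ + 1 + 1) (k + 1) := by
          rw [show s₀ + 1 + 1 + m = k + 1 from by omega]
        unfold maxF
        rw [hpdef, hIco, ← Finset.Ico_add_one_right_eq_Icc,
          Finset.sum_eq_sum_Ico_succ_bot (by omega : s₀ + 1 < k + 1), hk']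
        ring
      set K : ℝ := min 1 ((2:ℝ) ^ p) with hKdef
      refine ⟨c₃ * K / ((2:ℝ) ^ (k + 2)) ^ ((k : ℝ) + maxF k β s₀), (2:ℝ) ^ (2 * k + 4),
        div_pos (mul_pos hc₃ (min_pow_pos p)) (Real.rpow_pos_of_pos (by positivity) _), ?_, ?_⟩
      · calc (2:ℝ) = 2 ^ 1 := (pow_one 2).symm
        _ ≤ 2 ^ (2 * k + 4) := pow_le_pow_right₀ one_le_two (by omega)
      · intro t ht a ha haθ
        have ht2 : (2:ℝ) ≤ t := by
          refine le_trans ?_ ht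
          calc (2:ℝ) = 2 ^ 1 := (pow_one 2).symm
          _ ≤ 2 ^ (2 * k + 4) := pow_le_pow_right₀ one_le_two (by omega)
        have ht0 : (0:ℝ) < t := by linarith
        have ht1 : (1:ℝ) ≤ t := by linarith
        have hasqrt : a ≤ Real.sqrt t := by
          rw [Real.sqrt_eq_rpow]
          exact le_trans haθ (Real.rpow_le_rpow_of_exponent_le ht1 hθhalf)
        have hsq : ((2:ℝ) ^ (k + 2)) ≤ Real.sqrt t := by
          have h1 : ((2:ℝ) ^ (k + 2)) ^ 2 ≤ t := by
            calc ((2:ℝ) ^ (k + 2)) ^ 2 = 2 ^ (2 * k + 4) := by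
                  rw [← pow_mul]; congr 1; omega
            _ ≤ t := ht
          calc (2:ℝ) ^ (k + 2) = Real.sqrt (((2:ℝ) ^ (k + 2)) ^ 2) :=
                (Real.sqrt_sq (by positivity)).symm
          _ ≤ Real.sqrt t := Real.sqrt_le_sqrt h1
        have hsqt : Real.sqrt t ≤ t / 2 ^ (k + 2) := by
          rw [le_div_iff₀ (by positivity)]
          have h2 := Real.sq_sqrt ht0.le
          nlinarith [Real.sqrt_nonneg t]
        set L : ℝ := t / 2 ^ (k + 2) with hLdef
        have haL : a ≤ L := le_trans hasqrt hsqt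
        have hL1 : (1:ℝ) ≤ L := le_trans ha haL
        have hL0 : (0:ℝ) < L := by linarith
        have hpow2 : (0:ℝ) < (2:ℝ) ^ (k + 2) := by positivity
        have h2L : 2 * L ≤ t := by
          rw [hLdef, ← mul_div_assoc, div_le_iff₀ hpow2]
          have hp2 : (2:ℝ) ≤ 2 ^ (k + 2) := by
            calc (2:ℝ) = 2 ^ 1 := (pow_one 2).symm
            _ ≤ 2 ^ (k + 2) := pow_le_pow_right₀ one_le_two (by omega)
          nlinarith
        have hpt : ∀ u ∈ Set.Icc L (2 * L),
            c₃ * K * L ^ p ≤ u ^ β (s₀ + 1) * nestInt β t m (s₀ + 1 + 1) u := by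
          intro u hu
          have hu1 : 1 ≤ u := le_trans hL1 hu.1
          have hu0 : (0:ℝ) < u := by linarith
          have hcru : c₃ * u ^ ((m : ℝ) + ∑ i ∈ Finset.Ico (s₀ + 1 + 1) (s₀ + 1 + 1 + m), β i)
              ≤ nestInt β t m (s₀ + 1 + 1) u := by
            apply H₃ u t hu1
            have hm2 : (2:ℝ) ^ m * 2 ≤ 2 ^ (k + 2) := by
              rw [← pow_succ]
              exact pow_le_pow_right₀ one_le_two (by omega)
            have hu2L : u ≤ 2 * (t / 2 ^ (k + 2)) := by rw [← hLdef]; exact hu.2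
            have hTP : (0:ℝ) ≤ t / (2:ℝ) ^ (k + 2) := by positivity
            calc (2:ℝ) ^ m * u ≤ (2:ℝ) ^ m * (2 * (t / (2:ℝ) ^ (k + 2))) :=
                  mul_le_mul_of_nonneg_left hu2L (by positivity)
            _ = ((2:ℝ) ^ m * 2) * (t / (2:ℝ) ^ (k + 2)) := by ring
            _ ≤ (2:ℝ) ^ (k + 2) * (t / (2:ℝ) ^ (k + 2)) := mul_le_mul_of_nonneg_right hm2 hTP
            _ = t := by rw [mul_comm, div_mul_cancel₀ t hpow2.ne']
          have h1 : L ^ p * K ≤ u ^ p := rpow_dyadic_lower hL0 hu.1 hu.2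
          calc c₃ * K * L ^ p = c₃ * (L ^ p * K) := by ring
          _ ≤ c₃ * u ^ p := mul_le_mul_of_nonneg_left h1 hc₃.le
          _ = u ^ β (s₀ + 1) *
              (c₃ * u ^ ((m : ℝ) + ∑ i ∈ Finset.Ico (s₀ + 1 + 1) (s₀ + 1 + 1 + m), β i)) := by
              rw [hpdef, Real.rpow_add hu0]; ring
          _ ≤ _ := mul_le_mul_of_nonneg_left hcru (Real.rpow_nonneg hu0.le _)
        have hmono := intervalIntegral.integral_mono_on (μ := volume) (a := L) (b := 2 * L)
          (by linarith) intervalIntegrable_const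
          (nest_intble β m (s₀ + 1) hL1 (by linarith) h2L) hpt
        have hconst : (∫ _ in L..(2 * L), c₃ * K * L ^ p) = L * (c₃ * K * L ^ p) := by
          rw [intervalIntegral.integral_const, smul_eq_mul]; ring
        have hrestr := nest_restrict β m (s₀ + 1) ha haL (by linarith : L ≤ 2 * L) h2L
        rw [tB_rec_gt k β hs₀k hgt, tR_rec_gt k β hs₀k hgt, sub_self, Real.rpow_zero,
          show (1 - 1 : ℕ) = 0 from rfl, pow_zero, mul_one, mul_one]
        have hLrpow : L ^ ((k : ℝ) + maxF k β s₀)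
            = t ^ ((k : ℝ) + maxF k β s₀) / ((2:ℝ) ^ (k + 2)) ^ ((k : ℝ) + maxF k β s₀) := by
          rw [hLdef, Real.div_rpow ht0.le (by positivity)]
        calc c₃ * K / ((2:ℝ) ^ (k + 2)) ^ ((k : ℝ) + maxF k β s₀) * t ^ ((k : ℝ) + maxF k β s₀)
            = c₃ * K * (t ^ ((k : ℝ) + maxF k β s₀) / ((2:ℝ) ^ (k + 2)) ^ ((k : ℝ) + maxF k β s₀)) := by
              ring
        _ = c₃ * K * L ^ ((k : ℝ) + maxF k β s₀) := by rw [hLrpow]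
        _ = L * (c₃ * K * L ^ p) := by rw [← hEp, Real.rpow_add_one hL0.ne']; ring
        _ = ∫ _ in L..(2 * L), c₃ * K * L ^ p := hconst.symm
        _ ≤ ∫ u in L..(2 * L), u ^ β (s₀ + 1) * nestInt β t m (s₀ + 1 + 1) u := hmono
        _ ≤ nestInt β t (m + 1) (s₀ + 1) a := hrestr
    · -- case (b2): equal maximum: gain a logarithm
      have hle : maxF k β s₀ ≤ tB k β (s₀ + 1) := heqB.ge
      have hρpos : 1 ≤ tR k β (s₀ + 1) := tR_pos k β (s₀ + 1)
      obtain ⟨n, hn⟩ : ∃ n, tR k β (s₀ + 1) = n + 1 := ⟨tR k β (s₀ + 1) - 1, by omega⟩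
      refine ⟨c₂ * Δ, max 2 t₂, mul_pos hc₂ hΔ0, le_max_left _ _, ?_⟩
      intro t ht a ha haθ
      have ht2 : (2:ℝ) ≤ t := le_trans (le_max_left _ _) ht
      have htt₂ : t₂ ≤ t := le_trans (le_max_right _ _) ht
      have ht0 : (0:ℝ) < t := by linarith
      have ht1 : (1:ℝ) ≤ t := by linarith
      have ha0 : (0:ℝ) < a := by linarith
      have hlogt : 0 < Real.log t := Real.log_pos (by linarith)
      rw [tB_rec_le k β hs₀k hle, tR_rec_eq k β hs₀k heqB.symm, Nat.add_sub_cancel,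
        show maxF k β s₀ - tB k β (s₀ + 1) = 0 from by linarith, Real.rpow_zero, mul_one, hn]
      rw [hn, Nat.add_sub_cancel] at H₂
      set T : ℝ := t ^ (θ + Δ) with hTdef
      have haT : a ≤ T := le_trans haθ (Real.rpow_le_rpow_of_exponent_le ht1 (by linarith))
      have hTt : T ≤ t := by
        rw [hTdef]
        calc t ^ (θ + Δ) ≤ t ^ (1:ℝ) := Real.rpow_le_rpow_of_exponent_le ht1 hθΔ1
        _ = t := Real.rpow_one t
      have hT0 : (0:ℝ) < T := by linarith
      have h0T : (0:ℝ) ∉ Set.uIcc a T := by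
        rw [Set.uIcc_of_le haT]
        intro h
        linarith [h.1]
      set C : ℝ := c₂ * t ^ ((k : ℝ) + tB k β (s₀ + 1)) * Real.log t ^ n with hCdef
      have hC0 : 0 < C := by
        rw [hCdef]
        exact mul_pos (mul_pos hc₂ (Real.rpow_pos_of_pos ht0 _)) (pow_pos hlogt _)
      set γ : ℝ := β (s₀ + 1) + (maxF k β (s₀ + 1) - tB k β (s₀ + 1)) with hγdef
      have hγm1 : γ = -1 := by rw [hγdef]; linarith
      have hpt : ∀ u ∈ Set.Icc a T,
          C * u ^ γ ≤ u ^ β (s₀ + 1) * nestInt β t m (s₀ + 1 + 1) u := by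
        intro u hu
        have hu1 : 1 ≤ u := le_trans ha hu.1
        have hu0 : (0:ℝ) < u := by linarith
        have huT : u ≤ t ^ (θ + Δ) := by rw [← hTdef]; exact hu.2
        have hIH := H₂ t htt₂ u hu1 huT
        calc C * u ^ γ = u ^ β (s₀ + 1) * (c₂ * u ^ (maxF k β (s₀ + 1) - tB k β (s₀ + 1)) *
              t ^ ((k : ℝ) + tB k β (s₀ + 1)) * Real.log t ^ n) := by
                rw [hCdef, hγdef, Real.rpow_add hu0]; ring
        _ ≤ _ := mul_le_mul_of_nonneg_left hIH (Real.rpow_nonneg hu0.le _)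
      have hint1 : IntervalIntegrable (fun u : ℝ => C * u ^ γ) volume a T :=
        (intervalIntegrable_rpow (Or.inr h0T)).const_mul C
      have hint2 := nest_intble β m (s₀ + 1) ha haT hTt
      have hmono := intervalIntegral.integral_mono_on haT hint1 hint2 hpt
      have hrestr := nest_restrict β m (s₀ + 1) ha le_rfl haT hTt
      have hval : (∫ u in a..T, C * u ^ γ) = C * (Real.log T - Real.log a) := by
        rw [intervalIntegral.integral_const_mul, hγm1]
        simp_rw [Real.rpow_neg_one]
        rw [integral_inv h0T, Real.log_div hT0.ne' ha0.ne']
      have hloga : Real.log a ≤ θ * Real.log t := by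
        calc Real.log a ≤ Real.log (t ^ θ) := by
              rw [Real.log_le_log_iff ha0 (Real.rpow_pos_of_pos ht0 θ)]; exact haθ
        _ = θ * Real.log t := Real.log_rpow ht0 θ
      have hΔlog : Δ * Real.log t ≤ Real.log T - Real.log a := by
        rw [hTdef, Real.log_rpow ht0]
        linarith
      calc c₂ * Δ * t ^ ((k : ℝ) + tB k β (s₀ + 1)) * Real.log t ^ (n + 1)
          = C * (Δ * Real.log t) := by rw [hCdef, pow_succ]; ring
      _ ≤ C * (Real.log T - Real.log a) := mul_le_mul_of_nonneg_left hΔlog hC0.le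
      _ = ∫ u in a..T, C * u ^ γ := hval.symm
      _ ≤ ∫ u in a..T, u ^ β (s₀ + 1) * nestInt β t m (s₀ + 1 + 1) u := hmono
      _ ≤ nestInt β t (m + 1) (s₀ + 1) a := hrestr
    · -- case (b1): old maximum strictly dominates
      set ν : ℝ := tB k β (s₀ + 1) - maxF k β s₀ with hνdef
      have hν0 : 0 < ν := by rw [hνdef]; linarith
      refine ⟨c₂ / (2 * ν), max (max 2 t₂) ((2:ℝ) ^ ((Δ * ν)⁻¹)),
        div_pos hc₂ (by linarith), le_trans (le_max_left _ _) (le_max_left _ _), ?_⟩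
      intro t ht a ha haθ
      have ht2 : (2:ℝ) ≤ t := le_trans (le_trans (le_max_left _ _) (le_max_left _ _)) ht
      have htt₂ : t₂ ≤ t := le_trans (le_trans (le_max_right _ _) (le_max_left _ _)) ht
      have htν : (2:ℝ) ^ ((Δ * ν)⁻¹) ≤ t := le_trans (le_max_right _ _) ht
      have ht0 : (0:ℝ) < t := by linarith
      have ht1 : (1:ℝ) ≤ t := by linarith
      have ha0 : (0:ℝ) < a := by linarith
      have hlogt : 0 < Real.log t := Real.log_pos (by linarith)
      rw [tB_rec_le k β hs₀k hlt.le, tR_rec_lt k β hs₀k hlt]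
      set T : ℝ := t ^ (θ + Δ) with hTdef
      have haT : a ≤ T := le_trans haθ (Real.rpow_le_rpow_of_exponent_le ht1 (by linarith))
      have hTt : T ≤ t := by
        rw [hTdef]
        calc t ^ (θ + Δ) ≤ t ^ (1:ℝ) := Real.rpow_le_rpow_of_exponent_le ht1 hθΔ1
        _ = t := Real.rpow_one t
      have hT0 : (0:ℝ) < T := by linarith
      have h0T : (0:ℝ) ∉ Set.uIcc a T := by
        rw [Set.uIcc_of_le haT]
        intro h
        linarith [h.1]
      set C : ℝ := c₂ * t ^ ((k : ℝ) + tB k β (s₀ + 1)) * Real.log t ^ (tR k β (s₀ + 1) - 1)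
        with hCdef
      have hC0 : 0 < C := by
        rw [hCdef]
        exact mul_pos (mul_pos hc₂ (Real.rpow_pos_of_pos ht0 _)) (pow_pos hlogt _)
      set γ : ℝ := β (s₀ + 1) + (maxF k β (s₀ + 1) - tB k β (s₀ + 1)) with hγdef
      have hγ1 : γ + 1 = maxF k β s₀ - tB k β (s₀ + 1) := by rw [hγdef]; linarith
      have hγ1' : γ + 1 = -ν := by rw [hγ1, hνdef]; ring
      have hγne : γ ≠ -1 := by intro h; rw [h] at hγ1'; norm_num at hγ1'; linarith
      have hpt : ∀ u ∈ Set.Icc a T,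
          C * u ^ γ ≤ u ^ β (s₀ + 1) * nestInt β t m (s₀ + 1 + 1) u := by
        intro u hu
        have hu1 : 1 ≤ u := le_trans ha hu.1
        have hu0 : (0:ℝ) < u := by linarith
        have huT : u ≤ t ^ (θ + Δ) := by rw [← hTdef]; exact hu.2
        have hIH := H₂ t htt₂ u hu1 huT
        calc C * u ^ γ = u ^ β (s₀ + 1) * (c₂ * u ^ (maxF k β (s₀ + 1) - tB k β (s₀ + 1)) *
              t ^ ((k : ℝ) + tB k β (s₀ + 1)) * Real.log t ^ (tR k β (s₀ + 1) - 1)) := by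
                rw [hCdef, hγdef, Real.rpow_add hu0]; ring
        _ ≤ _ := mul_le_mul_of_nonneg_left hIH (Real.rpow_nonneg hu0.le _)
      have hint1 : IntervalIntegrable (fun u : ℝ => C * u ^ γ) volume a T :=
        (intervalIntegrable_rpow (Or.inr h0T)).const_mul C
      have hint2 := nest_intble β m (s₀ + 1) ha haT hTt
      have hmono := intervalIntegral.integral_mono_on haT hint1 hint2 hpt
      have hrestr := nest_restrict β m (s₀ + 1) ha le_rfl haT hTt
      have hval : (∫ u in a..T, C * u ^ γ)
          = C * ((T ^ (γ + 1) - a ^ (γ + 1)) / (γ + 1)) := by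
        rw [intervalIntegral.integral_const_mul,
          integral_rpow (Or.inr ⟨hγne, h0T⟩)]
      -- key largeness of t
      have hΔν0 : 0 < Δ * ν := mul_pos hΔ0 hν0
      have hkey : (2:ℝ) ≤ t ^ (Δ * ν) := by
        calc (2:ℝ) = ((2:ℝ) ^ ((Δ * ν)⁻¹)) ^ (Δ * ν) := by
              rw [← Real.rpow_mul (by norm_num), inv_mul_cancel₀ hΔν0.ne', Real.rpow_one]
        _ ≤ t ^ (Δ * ν) := Real.rpow_le_rpow (by positivity) htν hΔν0.le
      have haD : t ^ (θ * (γ + 1)) ≤ a ^ (γ + 1) := by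
        have h := Real.rpow_le_rpow_of_nonpos ha0 haθ (by rw [hγ1']; linarith : γ + 1 ≤ 0)
        rwa [← Real.rpow_mul ht0.le] at h
      have hTD : T ^ (γ + 1) = t ^ (θ * (γ + 1)) * t ^ (Δ * (γ + 1)) := by
        rw [hTdef, ← Real.rpow_mul ht0.le,
          show (θ + Δ) * (γ + 1) = θ * (γ + 1) + Δ * (γ + 1) from by ring,
          Real.rpow_add ht0]
      have hsmall : t ^ (Δ * (γ + 1)) ≤ 1 / 2 := by
        have heq2 : Δ * (γ + 1) = -(Δ * ν) := by rw [hγ1']; ring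
        rw [heq2, Real.rpow_neg ht0.le]
        calc (t ^ (Δ * ν))⁻¹ ≤ 2⁻¹ := inv_anti₀ (by norm_num) hkey
        _ = 1 / 2 := by norm_num
      have htθpos : 0 < t ^ (θ * (γ + 1)) := Real.rpow_pos_of_pos ht0 _
      have hapos : 0 < a ^ (γ + 1) := Real.rpow_pos_of_pos ha0 _
      have hT2 : T ^ (γ + 1) ≤ a ^ (γ + 1) / 2 := by
        calc T ^ (γ + 1) = t ^ (θ * (γ + 1)) * t ^ (Δ * (γ + 1)) := hTD
        _ ≤ t ^ (θ * (γ + 1)) * (1 / 2) := mul_le_mul_of_nonneg_left hsmall htθpos.le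
        _ ≤ a ^ (γ + 1) * (1 / 2) := by nlinarith
        _ = a ^ (γ + 1) / 2 := by ring
      have hgen : ∀ x y w : ℝ, 0 < w → 0 < x → y ≤ x / 2 → x / (2 * w) ≤ (y - x) / (-w) := by
        intro x y w hw hx hyx
        rw [div_neg, ← neg_div, neg_sub, div_le_div_iff₀ (by linarith) hw]
        nlinarith
      have hest : a ^ (γ + 1) / (2 * ν) ≤ (T ^ (γ + 1) - a ^ (γ + 1)) / (γ + 1) := by
        rw [hγ1'] at hT2 hapos ⊢
        exact hgen _ _ ν hν0 hapos hT2
      calc c₂ / (2 * ν) * a ^ (maxF k β s₀ - tB k β (s₀ + 1)) * t ^ ((k : ℝ) + tB k β (s₀ + 1))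
            * Real.log t ^ (tR k β (s₀ + 1) - 1)
          = C * (a ^ (γ + 1) / (2 * ν)) := by rw [hCdef, hγ1]; ring
      _ ≤ C * ((T ^ (γ + 1) - a ^ (γ + 1)) / (γ + 1)) := mul_le_mul_of_nonneg_left hest hC0.le
      _ = ∫ u in a..T, C * u ^ γ := hval.symm
      _ ≤ ∫ u in a..T, u ^ β (s₀ + 1) * nestInt β t m (s₀ + 1 + 1) u := hmono
      _ ≤ nestInt β t (m + 1) (s₀ + 1) a := hrestr

end NestedAux

open NestedAux

theorem nested_integral_lower_bound (k : ℕ) (hk : 1 ≤ k) (β : ℕ → ℝ) :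
    ∃ C₁ t₀ : ℝ, 0 < C₁ ∧ 2 ≤ t₀ ∧ ∀ t : ℝ, t₀ ≤ t →
      C₁ * t ^ ((k : ℝ) + maxB k β) * (Real.log t) ^ (numMax k β - 1) ≤
        nestInt β t k 1 1 := by
  obtain ⟨c, t₁, hc, ht₁, H⟩ := NestedAux.main k β k le_rfl
  refine ⟨c, t₁, hc, ht₁, fun t ht => ?_⟩
  have hkk : k - k = 0 := Nat.sub_self k
  rw [hkk] at H
  have ht1 : (1:ℝ) ≤ t := by linarith
  have h1θ : (1:ℝ) ≤ t ^ ((((0:ℕ):ℝ) + 1) / (2 * ((k:ℝ) + 1))) := by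
    calc (1:ℝ) = t ^ (0:ℝ) := (Real.rpow_zero t).symm
    _ ≤ t ^ ((((0:ℕ):ℝ) + 1) / (2 * ((k:ℝ) + 1))) :=
        Real.rpow_le_rpow_of_exponent_le ht1 (by positivity)
  have h := H t ht 1 le_rfl h1θ
  rw [tB_zero, tR_zero, Real.one_rpow, mul_one] at h
  simpa using h
end

section
/- Let χ ∈ (1/2, 1) be a real number and define, for t ≥ 1, T(t) = ∫₁^t u^{2χ−2} ( ∫_u^t v^{−1} ( ∫_v^t w^{−2χ} dw ) dv ) du. Then lim_{t→∞} T(t) / log t = 1/(2χ−1)². -/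
open Real MeasureTheory intervalIntegral Filter

lemma aux_middle (χ t u : ℝ) (hχ : 2 * χ - 1 ≠ 0) (hu : 0 < u) (hut : u ≤ t) :
    (∫ v in u..t, v ^ (-1 : ℝ) * ∫ w in v..t, w ^ (-(2 * χ))) =
      t ^ (1 - 2*χ) / (1 - 2*χ) * (Real.log t - Real.log u)
        - (t ^ (1 - 2*χ) - u ^ (1 - 2*χ)) / (1 - 2*χ)^2 := by
  have ht : 0 < t := lt_of_lt_of_le hu hut
  have huIcc : Set.uIcc u t = Set.Icc u t := Set.uIcc_of_le hut
  have hpos : ∀ x ∈ Set.uIcc u t, 0 < x := by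
    intro x hx; rw [huIcc] at hx; exact lt_of_lt_of_le hu hx.1
  have hβ : (1 - 2*χ) ≠ 0 := by intro h; apply hχ; linarith
  have hcongr : Set.EqOn (fun v : ℝ => v ^ (-1 : ℝ) * ∫ w in v..t, w ^ (-(2 * χ)))
      (fun v : ℝ => t ^ (1-2*χ)/(1-2*χ) * v⁻¹ - v ^ (-(2*χ)) / (1-2*χ))
      (Set.uIcc u t) := by
    intro v hv
    have hv0 : 0 < v := hpos v hv
    have hinner : (∫ w in v..t, w ^ (-(2*χ))) =
        (t ^ (1-2*χ) - v ^ (1-2*χ))/(1-2*χ) := by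
      rw [integral_rpow (Or.inr ⟨by intro h; apply hχ; linarith,
        Set.notMem_uIcc_of_lt hv0 ht⟩),
        show (-(2*χ)+1 : ℝ) = 1-2*χ by ring]
    have e : v ^ (-(2*χ)) = v⁻¹ * v ^ (1-2*χ) := by
      rw [← Real.rpow_neg_one v, ← Real.rpow_add hv0]
      congr 1; ring
    simp only [hinner, Real.rpow_neg_one, e]
    field_simp
  rw [intervalIntegral.integral_congr hcongr]
  rw [intervalIntegral.integral_eq_sub_of_hasDerivAt
    (f := fun v => t ^ (1-2*χ)/(1-2*χ) * Real.log v - v ^ (1-2*χ) / (1-2*χ)^2)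
    (fun v hv => by
      have hv0 : 0 < v := hpos v hv
      have l := (Real.hasDerivAt_log hv0.ne').const_mul (t ^ (1-2*χ)/(1-2*χ))
      have r := (Real.hasDerivAt_rpow_const (x := v) (p := 1-2*χ)
        (Or.inl hv0.ne')).div_const ((1-2*χ)^2)
      have H := l.sub r
      convert H using 1
      · rfl
      rw [show (1-2*χ-1 : ℝ) = -(2*χ) by ring]
      field_simp)
    (by
      apply ContinuousOn.intervalIntegrable
      apply ContinuousOn.sub
      · exact continuousOn_const.mul
          (ContinuousOn.inv₀ continuousOn_id (fun x hx => (hpos x hx).ne'))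
      · exact (continuousOn_id.rpow_const
          (fun x hx => Or.inl (hpos x hx).ne')).div_const _)]
  field_simp
  ring

lemma aux_outer (χ t : ℝ) (hχ : 2*χ - 1 ≠ 0) (ht : 1 ≤ t) :
    (∫ u in (1:ℝ)..t, u ^ (2 * χ - 2) *
        ∫ v in u..t, v ^ (-1 : ℝ) * ∫ w in v..t, w ^ (-(2 * χ))) =
      Real.log t/(2*χ-1)^2 + t^(1-2*χ)*Real.log t/(2*χ-1)^2
        + (2*t^(1-2*χ) - 2)/(2*χ-1)^3 := by
  have ht0 : (0:ℝ) < t := lt_of_lt_of_le one_pos ht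
  have huIcc : Set.uIcc (1:ℝ) t = Set.Icc 1 t := Set.uIcc_of_le ht
  have hpos : ∀ x ∈ Set.uIcc (1:ℝ) t, 0 < x := by
    intro x hx; rw [huIcc] at hx; exact lt_of_lt_of_le one_pos hx.1
  have hβ : (1 - 2*χ) ≠ 0 := by intro h; apply hχ; linarith
  have hcongr : Set.EqOn
      (fun u : ℝ => u ^ (2 * χ - 2) *
        ∫ v in u..t, v ^ (-1 : ℝ) * ∫ w in v..t, w ^ (-(2 * χ)))
      (fun u : ℝ => u ^ (2*χ-2) *
        (t ^ (1 - 2*χ) / (1 - 2*χ) * (Real.log t - Real.log u)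
          - (t ^ (1 - 2*χ) - u ^ (1 - 2*χ)) / (1 - 2*χ)^2))
      (Set.uIcc (1:ℝ) t) := by
    intro u hu
    have hu0 : 0 < u := hpos u hu
    have hut : u ≤ t := by rw [huIcc] at hu; exact hu.2
    simp only [aux_middle χ t u hχ hu0 hut]
  rw [intervalIntegral.integral_congr hcongr]
  rw [intervalIntegral.integral_eq_sub_of_hasDerivAt
    (f := fun u => (-(t ^ (1-2*χ) * Real.log t/(2*χ-1)^2)) * u ^ (2*χ-1)
      + (t ^ (1-2*χ)/(2*χ-1)^3) * ((2*χ-1) * (u ^ (2*χ-1) * Real.log u) - u ^ (2*χ-1))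
      - (t ^ (1-2*χ)/(2*χ-1)^3) * u ^ (2*χ-1)
      + (1/(2*χ-1)^2) * Real.log u)
    (fun u hu => by
      have hu0 : 0 < u := hpos u hu
      have l := Real.hasDerivAt_log hu0.ne'
      have r := Real.hasDerivAt_rpow_const (x := u) (p := 2*χ-1) (Or.inl hu0.ne')
      have h2 := r.mul l
      have H := (((r.const_mul (-(t ^ (1-2*χ) * Real.log t/(2*χ-1)^2))).add
        (((h2.const_mul (2*χ-1)).sub r).const_mul (t ^ (1-2*χ)/(2*χ-1)^3))).sub
        (r.const_mul (t ^ (1-2*χ)/(2*χ-1)^3))).add (l.const_mul (1/(2*χ-1)^2))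
      convert H using 1
      · rfl
      have e0 : u ^ (2*χ-1-1) = u ^ (2*χ-1) / u := Real.rpow_sub_one hu0.ne' _
      have e1 : u ^ (2*χ-2) = u ^ (2*χ-1) / u := by
        rw [show (2*χ-2 : ℝ) = 2*χ-1-1 by ring]; exact Real.rpow_sub_one hu0.ne' _
      have e2 : u ^ (1-2*χ) = (u ^ (2*χ-1))⁻¹ := by
        rw [show (1-2*χ : ℝ) = -(2*χ-1) by ring, Real.rpow_neg hu0.le]
      have hX : u ^ (2*χ-1) ≠ 0 := (Real.rpow_pos_of_pos hu0 _).ne'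
      rw [e0, e1, e2]
      set X := u ^ (2*χ-1) with hXdef
      field_simp
      ring)
    (by
      apply ContinuousOn.intervalIntegrable
      apply ContinuousOn.mul
      · exact continuousOn_id.rpow_const (fun x hx => Or.inl (hpos x hx).ne')
      · apply ContinuousOn.sub
        · exact continuousOn_const.mul (continuousOn_const.sub
            (Real.continuousOn_log.mono (fun x hx => (hpos x hx).ne')))
        · exact (continuousOn_const.sub (continuousOn_id.rpow_const
            (fun x hx => Or.inl (hpos x hx).ne'))).div_const _)]
  have ht1 : t ^ (1-2*χ) * t ^ (2*χ-1) = 1 := by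
    rw [← Real.rpow_add ht0]; norm_num
  have h1r : (1:ℝ) ^ (2*χ-1) = 1 := Real.one_rpow _
  simp only [Real.log_one, h1r]
  have hYX : t ^ (1-2*χ) = (t ^ (2*χ-1))⁻¹ := by
    rw [show (1-2*χ : ℝ) = -(2*χ-1) by ring, Real.rpow_neg ht0.le]
  have hTX : t ^ (2*χ-1) ≠ 0 := (Real.rpow_pos_of_pos ht0 _).ne'
  rw [hYX]
  field_simp
  ring

theorem triangle_integral_tau_gt_three (χ : ℝ) (h1 : 1 / 2 < χ) (h2 : χ < 1) :
    Filter.Tendsto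
      (fun t : ℝ =>
        (∫ u in (1:ℝ)..t, u ^ (2 * χ - 2) *
          ∫ v in u..t, v ^ (-1 : ℝ) *
            ∫ w in v..t, w ^ (-(2 * χ))) / Real.log t)
      Filter.atTop (nhds (1 / (2 * χ - 1) ^ 2)) := by
  have ha : (0:ℝ) < 2*χ-1 := by linarith
  have hne : (2*χ-1 : ℝ) ≠ 0 := ha.ne'
  have key : (fun t : ℝ =>
        (∫ u in (1:ℝ)..t, u ^ (2 * χ - 2) *
          ∫ v in u..t, v ^ (-1 : ℝ) *
            ∫ w in v..t, w ^ (-(2 * χ))) / Real.log t)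
      =ᶠ[atTop] (fun t : ℝ => 1/(2*χ-1)^2 + t^(1-2*χ)/(2*χ-1)^2
        + (2*t^(1-2*χ)-2)/(2*χ-1)^3 * (Real.log t)⁻¹) := by
    filter_upwards [eventually_gt_atTop (1:ℝ)] with t ht
    rw [aux_outer χ t hne ht.le]
    have hlog : Real.log t ≠ 0 := (Real.log_pos ht).ne'
    field_simp
  have h1' : Tendsto (fun t:ℝ => t ^ (1-2*χ)) atTop (nhds 0) := by
    have h := tendsto_rpow_neg_atTop ha
    simpa [show -(2*χ-1) = (1-2*χ:ℝ) by ring] using h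
  have h2' : Tendsto (fun t:ℝ => (Real.log t)⁻¹) atTop (nhds 0) :=
    Real.tendsto_log_atTop.inv_tendsto_atTop
  have total : Tendsto (fun t : ℝ => 1/(2*χ-1)^2 + t^(1-2*χ)/(2*χ-1)^2
        + (2*t^(1-2*χ)-2)/(2*χ-1)^3 * (Real.log t)⁻¹) atTop
      (nhds (1/(2*χ-1)^2 + 0/(2*χ-1)^2 + (2*0-2)/(2*χ-1)^3 * 0)) := by
    exact (tendsto_const_nhds.add (h1'.div_const _)).add
      ((((h1'.const_mul 2).sub_const 2).div_const _).mul h2')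
  have := total.congr' key.symm
  simpa using this
end

section
/- Let χ ∈ (0, 1/2) be a real number and define, for t ≥ 1, T(t) = ∫₁^t u^{2χ−2} ( ∫_u^t v^{−1} ( ∫_v^t w^{−2χ} dw ) dv ) du. Then lim_{t→∞} T(t) / ( t^{1−2χ} log t ) = 1/(1−2χ)². -/
open Real MeasureTheory intervalIntegral Filter

theorem triangle_integral_tau_in_two_three (χ : ℝ) (h1 : 0 < χ) (h2 : χ < 1 / 2) :
    Filter.Tendsto
      (fun t : ℝ =>
        (∫ u in (1:ℝ)..t, u ^ (2 * χ - 2) *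
          ∫ v in u..t, v ^ (-1 : ℝ) *
            ∫ w in v..t, w ^ (-(2 * χ))) / (t ^ (1 - 2 * χ) * Real.log t))
      Filter.atTop (nhds (1 / (1 - 2 * χ) ^ 2)) := by
  have ha0 : (0:ℝ) < 1 - 2 * χ := by linarith
  set a : ℝ := 1 - 2 * χ with ha
  clear_value a
  have hane : a ≠ 0 := ne_of_gt ha0
  -- inner integral
  have hinner : ∀ v t : ℝ, (∫ w in v..t, w ^ (-(2 * χ))) = (t ^ a - v ^ a) / a := by
    intro v t
    rw [integral_rpow (Or.inl (by linarith))]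
    rw [show -(2 * χ) + 1 = a by rw [ha]; ring]
  -- middle integral
  have hmid : ∀ t u : ℝ, 1 ≤ u → u ≤ t →
      (∫ v in u..t, v ^ (-1 : ℝ) * ((t ^ a - v ^ a) / a))
        = (t ^ a * (Real.log t - Real.log u) - (t ^ a - u ^ a) / a) / a := by
    intro t u hu hut
    have huIcc : Set.uIcc u t = Set.Icc u t := Set.uIcc_of_le hut
    have hcont : ContinuousOn (fun v : ℝ => v ^ (-1 : ℝ) * ((t ^ a - v ^ a) / a))
        (Set.uIcc u t) := by
      apply ContinuousOn.mul
      · exact continuousOn_id.rpow_const fun x hx => Or.inl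
          (by rw [huIcc] at hx; have h3 : (1:ℝ) ≤ x := le_trans hu hx.1
              intro h0; simp only [id_eq] at h0; rw [h0] at h3; linarith)
      · exact (continuousOn_const.sub (continuousOn_id.rpow_const fun x hx => Or.inl
          (by rw [huIcc] at hx; have h3 : (1:ℝ) ≤ x := le_trans hu hx.1
              intro h0; simp only [id_eq] at h0; rw [h0] at h3; linarith))).div_const a
    rw [integral_eq_sub_of_hasDerivAt (f := fun v => (t ^ a * Real.log v - v ^ a / a) / a)
        ?_ (hcont.intervalIntegrable)]
    · ring
    · intro x hx
      rw [huIcc] at hx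
      have hx0 : (0:ℝ) < x := lt_of_lt_of_le one_pos (le_trans hu hx.1)
      have hd : HasDerivAt (fun v : ℝ => (t ^ a * Real.log v - v ^ a / a) / a)
          ((t ^ a * x⁻¹ - a * x ^ (a - 1) / a) / a) x :=
        (((Real.hasDerivAt_log hx0.ne').const_mul (t ^ a)).sub
          ((Real.hasDerivAt_rpow_const (Or.inl hx0.ne')).div_const a)).div_const a
      convert hd using 1
      · rfl
      · rfl
      rw [Real.rpow_neg_one, Real.rpow_sub hx0, Real.rpow_one]
      field_simp
  -- outer integral
  have houter : ∀ t : ℝ, 1 ≤ t →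
      (∫ u in (1:ℝ)..t, u ^ (2 * χ - 2) *
          ∫ v in u..t, v ^ (-1 : ℝ) * ∫ w in v..t, w ^ (-(2 * χ)))
        = (1 / a) * ((t ^ a + 1) * Real.log t / a + 2 * (1 - t ^ a) / a ^ 2) := by
    intro t ht
    have huIcc : Set.uIcc (1:ℝ) t = Set.Icc 1 t := Set.uIcc_of_le ht
    have ht0 : (0:ℝ) < t := lt_of_lt_of_le one_pos ht
    have hcongr : ∀ u ∈ Set.uIcc (1:ℝ) t,
        (u ^ (2 * χ - 2) * ∫ v in u..t, v ^ (-1 : ℝ) * ∫ w in v..t, w ^ (-(2 * χ)))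
          = u ^ (2 * χ - 2) *
            ((t ^ a * (Real.log t - Real.log u) - (t ^ a - u ^ a) / a) / a) := by
      intro u hu
      rw [huIcc] at hu
      simp only [hinner]
      rw [hmid t u hu.1 hu.2]
    rw [intervalIntegral.integral_congr hcongr]
    have hcont : ContinuousOn (fun u : ℝ => u ^ (2 * χ - 2) *
        ((t ^ a * (Real.log t - Real.log u) - (t ^ a - u ^ a) / a) / a))
        (Set.uIcc (1:ℝ) t) := by
      have hne : ∀ x ∈ Set.uIcc (1:ℝ) t, x ≠ 0 := by
        intro x hx
        rw [huIcc] at hx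
        have h3 := hx.1; intro h0; rw [h0] at h3; linarith
      apply ContinuousOn.mul
      · exact continuousOn_id.rpow_const fun x hx => Or.inl (hne x hx)
      · apply ContinuousOn.div_const
        apply ContinuousOn.sub
        · exact continuousOn_const.mul (continuousOn_const.sub
            (Real.continuousOn_log.mono fun x hx => hne x hx))
        · exact (continuousOn_const.sub
            (continuousOn_id.rpow_const fun x hx => Or.inl (hne x hx))).div_const a
    rw [integral_eq_sub_of_hasDerivAt (f := fun u =>
        (1 / a) * (-t ^ a * Real.log t * u ^ (-a) / a + t ^ a * (u ^ (-a) * Real.log u) / a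
          + 2 * t ^ a * u ^ (-a) / a ^ 2 + Real.log u / a)) ?_ hcont.intervalIntegrable]
    · have htt : t ^ a * t ^ (-a) = 1 := by
        rw [← Real.rpow_add ht0]; simp
      have h1a : (1:ℝ) ^ (-a) = 1 := Real.one_rpow _
      rw [h1a, Real.log_one]
      have e1 : t ^ a * (t ^ (-a) * Real.log t) = Real.log t := by
        rw [show t ^ a * (t ^ (-a) * Real.log t) = (t ^ a * t ^ (-a)) * Real.log t by ring,
          htt, one_mul]
      have e2 : -t ^ a * Real.log t * t ^ (-a) = -Real.log t := by
        rw [show -t ^ a * Real.log t * t ^ (-a) = -((t ^ a * t ^ (-a)) * Real.log t) by ring,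
          htt, one_mul]
      have e3 : 2 * t ^ a * t ^ (-a) = 2 := by
        rw [show 2 * t ^ a * t ^ (-a) = 2 * (t ^ a * t ^ (-a)) by ring, htt, mul_one]
      rw [e1, e2, e3]
      ring
    · intro x hx
      rw [huIcc] at hx
      have hx0 : (0:ℝ) < x := lt_of_lt_of_le one_pos hx.1
      have p1 : HasDerivAt (fun u : ℝ => u ^ (-a)) (-a * x ^ (-a - 1)) x :=
        Real.hasDerivAt_rpow_const (Or.inl hx0.ne')
      have p2 : HasDerivAt Real.log x⁻¹ x := Real.hasDerivAt_log hx0.ne'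
      have hd : HasDerivAt (fun u : ℝ =>
          (1 / a) * (-t ^ a * Real.log t * u ^ (-a) / a + t ^ a * (u ^ (-a) * Real.log u) / a
            + 2 * t ^ a * u ^ (-a) / a ^ 2 + Real.log u / a))
          ((1 / a) * ((-t ^ a * Real.log t) * (-a * x ^ (-a - 1)) / a
            + t ^ a * ((-a * x ^ (-a - 1)) * Real.log x + x ^ (-a) * x⁻¹) / a
            + 2 * t ^ a * (-a * x ^ (-a - 1)) / a ^ 2 + x⁻¹ / a)) x := by
        exact (((((p1.const_mul (-t ^ a * Real.log t)).div_const a).add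
          (((p1.mul p2).const_mul (t ^ a)).div_const a)).add
          (((p1.const_mul (2 * t ^ a)).div_const (a ^ 2)))).add
          (p2.div_const a)).const_mul (1 / a)
      convert hd using 1
      · rfl
      · rfl
      have e1 : x ^ (2 * χ - 2) = x ^ (-a - 1) := by
        rw [show 2 * χ - 2 = -a - 1 by rw [ha]; ring]
      have e2 : x ^ (-a) * x⁻¹ = x ^ (-a - 1) := by
        rw [← Real.rpow_neg_one x, ← Real.rpow_add hx0]
        congr 1
      have e3 : x⁻¹ = x ^ a * x ^ (-a - 1) := by
        rw [← Real.rpow_add hx0, show a + (-a - 1) = (-1 : ℝ) by ring, Real.rpow_neg_one]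
      rw [e1, e2, e3]
      field_simp
      ring
  -- limit computation
  have l1 : Filter.Tendsto (fun t : ℝ => t ^ (-a)) Filter.atTop (nhds 0) :=
    tendsto_rpow_neg_atTop ha0
  have l2 : Filter.Tendsto (fun t : ℝ => (Real.log t)⁻¹) Filter.atTop (nhds 0) :=
    tendsto_inv_atTop_zero.comp Real.tendsto_log_atTop
  have lR : Filter.Tendsto (fun t : ℝ =>
      (t ^ (-a) + 1) / a ^ 2 + 2 / a ^ 3 * ((t ^ (-a) - 1) * (Real.log t)⁻¹))
      Filter.atTop (nhds ((0 + 1) / a ^ 2 + 2 / a ^ 3 * ((0 - 1) * 0))) :=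
    ((l1.add tendsto_const_nhds).div_const _).add
      (((l1.sub tendsto_const_nhds).mul l2).const_mul _)
  have hval : (0 + 1) / a ^ 2 + 2 / a ^ 3 * ((0 - 1) * 0) = 1 / a ^ 2 := by ring
  rw [hval] at lR
  apply Filter.Tendsto.congr' _ lR
  filter_upwards [Filter.eventually_ge_atTop (2:ℝ)] with t ht
  have ht1 : (1:ℝ) < t := by linarith
  have ht0 : (0:ℝ) < t := by linarith
  have hlog : 0 < Real.log t := Real.log_pos ht1
  have hta : (0:ℝ) < t ^ a := Real.rpow_pos_of_pos ht0 a
  rw [houter t (le_of_lt ht1)]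
  have hneg : t ^ (-a) = (t ^ a)⁻¹ := Real.rpow_neg (le_of_lt ht0) a
  rw [hneg]
  field_simp
  ring
end
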